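/- arXiv:1806.09854 — 4 statements merged into one kernel-verified Lean document; each statement's English description precedes it below -/
import Mathlib

section
/- Let ω be a radial weight with ω̂(r) = ∫_r^1 ω(s) ds > 0 for all 0 ≤ r < 1. Then ω ∈ Ď if and only if there exist constants C = C(ω) > 0 and α = α(ω) > 0 such that ω̂(t) ≤ C ((1−t)/(1−r))^α ω̂(r) for all 0 ≤ r ≤ t < 1. -/
open MeasureTheory Set
open scoped ENNReal ComplexConjugate

noncomputable section

/-- The open unit disc in `ℂ`. -/
def UD : Set ℂ := Metric.ball (0 : ℂ) 1

/-- Normalized area measure `dA = dx dy / π` on `ℂ`. -/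
def dA : Measure ℂ := (ENNReal.ofReal Real.pi)⁻¹ • (MeasureTheory.volume : Measure ℂ)

/-- `ω̂(r) = ∫_r^1 ω(s) ds` for a (radial) weight `ω : ℂ → ℝ`. -/
def what (ω : ℂ → ℝ) (r : ℝ) : ℝ := ∫ s in r..(1 : ℝ), ω (s : ℂ)

/-- A radial weight: nonnegative, radial, integrable over the unit disc. -/
def RadialWeight (ω : ℂ → ℝ) : Prop :=
  (∀ z, 0 ≤ ω z) ∧ (∀ z : ℂ, ω z = ω ((‖z‖ : ℝ) : ℂ)) ∧ IntegrableOn ω UD dA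

/-- `ω̂ > 0` on `[0,1)`. -/
def WhatPos (ω : ℂ → ℝ) : Prop := ∀ r : ℝ, 0 ≤ r → r < 1 → 0 < what ω r

/-- The class `D̂`. -/
def Dhat (ω : ℂ → ℝ) : Prop :=
  ∃ C > (1 : ℝ), ∀ r : ℝ, 0 ≤ r → r < 1 → what ω r ≤ C * what ω ((1 + r) / 2)

/-- The class `Ď`. -/
def Dcheck (ω : ℂ → ℝ) : Prop :=
  ∃ K > (1 : ℝ), ∃ C > (1 : ℝ), ∀ r : ℝ, 0 ≤ r → r < 1 →
    C * what ω (1 - (1 - r) / K) ≤ what ω r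

/-- The class `D = D̂ ∩ Ď`. -/
def Dclass (ω : ℂ → ℝ) : Prop := Dhat ω ∧ Dcheck ω

/-- A `Ď`-exponent `α > 0` for `ω`: `ω̂(t) ≤ C ((1-t)/(1-r))^α ω̂(r)` for `0 ≤ r ≤ t < 1`. -/
def DcheckExp (ω : ℂ → ℝ) (α : ℝ) : Prop :=
  ∃ C > (0 : ℝ), ∀ r t : ℝ, 0 ≤ r → r ≤ t → t < 1 →
    what ω t ≤ C * ((1 - t) / (1 - r)) ^ α * what ω r

/-- A `D̂`-exponent `β > 0` for `ω`: `ω̂(r) ≤ C ((1-r)/(1-t))^β ω̂(t)` for `0 ≤ r ≤ t < 1`. -/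
def DhatExp (ω : ℂ → ℝ) (β : ℝ) : Prop :=
  ∃ C > (0 : ℝ), ∀ r t : ℝ, 0 ≤ r → r ≤ t → t < 1 →
    what ω r ≤ C * ((1 - r) / (1 - t)) ^ β * what ω t

/-- Weighted `L^p` "norm" over the unit disc. -/
def wnorm (p : ℝ) (ω : ℂ → ℝ) (f : ℂ → ℂ) : ℝ :=
  (∫ z in UD, ‖f z‖ ^ p * ω z ∂dA) ^ (1 / p)

/-- Membership in the weighted Lebesgue space `L^p_ω`. -/
def MemLw (p : ℝ) (ω : ℂ → ℝ) (f : ℂ → ℂ) : Prop :=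
  AEStronglyMeasurable f (dA.restrict UD) ∧
  IntegrableOn (fun z => ‖f z‖ ^ p * ω z) UD dA

/-- Membership in the weighted Bergman space `A^p_ω`. -/
def MemAp (p : ℝ) (ω : ℂ → ℝ) (f : ℂ → ℂ) : Prop :=
  DifferentiableOn ℂ f UD ∧ IntegrableOn (fun z => ‖f z‖ ^ p * ω z) UD dA

/-- `H^∞`: bounded analytic functions on the unit disc. -/
def Hinfty (f : ℂ → ℂ) : Prop :=
  DifferentiableOn ℂ f UD ∧ ∃ M : ℝ, ∀ z ∈ UD, ‖f z‖ ≤ M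

/-- Moments `ν_x = ∫_0^1 t^x ν(t) dt`. -/
def mom (ν : ℂ → ℝ) (x : ℝ) : ℝ := ∫ t in (0 : ℝ)..1, t ^ x * ν (t : ℂ)

/-- The Bergman reproducing kernel of `A²_ν`. -/
def Bker (ν : ℂ → ℝ) (z ζ : ℂ) : ℂ :=
  ∑' n : ℕ, (ζ * conj z) ^ n / (((2 * mom ν (2 * (n : ℝ) + 1) : ℝ)) : ℂ)

/-- The Bergman projection `P_ν`. -/
def Pw (ν : ℂ → ℝ) (f : ℂ → ℂ) (z : ℂ) : ℂ :=
  ∫ ζ in UD, f ζ * conj (Bker ν z ζ) * ((ν ζ : ℝ) : ℂ) ∂dA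

/-- The Hankel operator `H_f^ν(g) = f g − P_ν(f g)`. -/
def Hankel (ν : ℂ → ℝ) (f g : ℂ → ℂ) (z : ℂ) : ℂ :=
  f z * g z - Pw ν (fun ζ => f ζ * g ζ) z

/-- The standard weighted Bergman projection `P_η`. -/
def Pstd (η : ℝ) (f : ℂ → ℂ) (z : ℂ) : ℂ :=
  (((η + 1 : ℝ)) : ℂ) *
    ∫ ζ in UD, f ζ * (((1 - ‖ζ‖ ^ 2) ^ η : ℝ) : ℂ) *
      (1 - z * conj ζ) ^ (((-(2 + η) : ℝ)) : ℂ) ∂dA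

/-- The Bekollé–Bonami class `B_q` (for radial weights). -/
def Bq (q : ℝ) (ν : ℂ → ℝ) : Prop :=
  ∃ η > (-1 : ℝ), ∃ C > (0 : ℝ), ∀ f : ℂ → ℂ, MemLw q ν f →
    wnorm q ν (Pstd η f) ≤ C * wnorm q ν f

/-- Pseudo-hyperbolic distance. -/
def pd (z ζ : ℂ) : ℝ := ‖(z - ζ) / (1 - conj z * ζ)‖

/-- Hyperbolic distance `β(z,ζ)`. -/
def hyp (z ζ : ℂ) : ℝ := (1 / 2) * Real.log ((1 + pd z ζ) / (1 - pd z ζ))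

/-- The hyperbolic disc `Δ(z,r)`. -/
def hDisc (z : ℂ) (r : ℝ) : Set ℂ := {ζ ∈ UD | hyp z ζ < r}

/-- `ν(Δ(z,r))`. -/
def nuD (ν : ℂ → ℝ) (z : ℂ) (r : ℝ) : ℝ := ∫ ζ in hDisc z r, ν ζ ∂dA

/-- The function `γ(z)`. -/
def gam (ω ν : ℂ → ℝ) (p q : ℝ) (z : ℂ) : ℝ :=
  (what ν ‖z‖) ^ (1 / q) * (1 - ‖z‖) ^ (1 / q) /
    ((what ω ‖z‖) ^ (1 / p) * (1 - ‖z‖) ^ (1 / p))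

/-- The average `f̂_{r,ν}(z)`. -/
def havg (ν : ℂ → ℝ) (r : ℝ) (f : ℂ → ℂ) (z : ℂ) : ℂ :=
  (∫ ζ in hDisc z r, ν ζ • f ζ ∂dA) / ((nuD ν z r : ℝ) : ℂ)

/-- The mean oscillation `MO_{ν,q,r}(f)(z)`. -/
def MO (ν : ℂ → ℝ) (q r : ℝ) (f : ℂ → ℂ) (z : ℂ) : ℝ :=
  ((∫ ζ in hDisc z r, ‖f ζ - havg ν r f z‖ ^ q * ν ζ ∂dA) / nuD ν z r) ^ (1 / q)

/-- Finiteness of the `BMO(Δ)_{ω,ν,p,q,r}` norm. -/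
def BMOfin (ω ν : ℂ → ℝ) (p q r : ℝ) (f : ℂ → ℂ) : Prop :=
  ∃ M : ℝ, ∀ z ∈ UD, MO ν q r f z * gam ω ν p q z ≤ M

/-- Boundedness of the Hankel operator `H_f^ν : A^p_ω → L^q_ν` tested on `H^∞`. -/
def HankelBdd (p q : ℝ) (ω ν : ℂ → ℝ) (f : ℂ → ℂ) : Prop :=
  ∃ C > (0 : ℝ), ∀ g : ℂ → ℂ, Hinfty g → wnorm q ν (Hankel ν f g) ≤ C * wnorm p ω g

/-- `ω̂` extended by the convention `ω̂(t) = ω̂(0)` for `t < 0`. -/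
def whatE (ω : ℂ → ℝ) (t : ℝ) : ℝ := what ω (max t 0)

/-- The function `Γ_τ(z,ζ)`. -/
def Gam (ω ν : ℂ → ℝ) (p q τ : ℝ) (z ζ : ℂ) : ℝ :=
  ((‖1 - conj z * ζ‖ ^ 2 / max (1 - ‖z‖ ^ 2) (1 - ‖ζ‖ ^ 2)) ^ (1 / p - (τ + 1) / q) *
      whatE ω (1 - 2 * ‖1 - conj z * ζ‖ ^ 2 / max (1 - ‖z‖ ^ 2) (1 - ‖ζ‖ ^ 2)) ^ (1 / p)) /
    (min (what ν ‖z‖ / (1 - ‖z‖) ^ τ) (what ν ‖ζ‖ / (1 - ‖ζ‖) ^ τ)) ^ (1 / q)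

/-- The generalized Berezin transform `B_{ν,c,σ}(φ)(z)` of a real-valued `φ`. -/
def Ber (ν : ℂ → ℝ) (c σ : ℝ) (φ : ℂ → ℝ) (z : ℂ) : ℝ :=
  (1 - ‖z‖ ^ 2) ^ (c + 1) / what ν ‖z‖ *
    ∫ ζ in UD, φ ζ * (1 - ‖ζ‖ ^ 2) ^ σ * ‖1 - z * conj ζ‖ ^ (-(2 + c + σ)) * ν ζ ∂dA

/-- The operator `T_{b,c}`. -/
def Tbc (b c : ℝ) (f : ℂ → ℂ) (z : ℂ) : ℂ :=
  ∫ ζ in UD, f ζ * (((1 - ‖ζ‖ ^ 2) ^ b : ℝ) : ℂ) * (1 - z * conj ζ) ^ (((-c : ℝ)) : ℂ) ∂dA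

/-- The operator `S_{b,c}`. -/
def Sbc (b c : ℝ) (f : ℂ → ℂ) (z : ℂ) : ℂ :=
  ∫ ζ in UD, f ζ * ((((1 - ‖ζ‖ ^ 2) ^ b * ‖1 - z * conj ζ‖ ^ (-c)) : ℝ) : ℂ) ∂dA

/-- The standard kernel `B^η_z(ζ) = (1 − conj(z) ζ)^{−(2+η)}`. -/
def Bstd (η : ℝ) (z ζ : ℂ) : ℂ := (1 - conj z * ζ) ^ (((-(2 + η) : ℝ)) : ℂ)

/-- The normalized kernel `b^η_{z,ω}`. -/
def bnrm (p : ℝ) (ω : ℂ → ℝ) (η : ℝ) (z ζ : ℂ) : ℂ :=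
  Bstd η z ζ / ((wnorm p ω (Bstd η z) : ℝ) : ℂ)

/-- The function `g^η_{z,ω} = P_ν(conj(f) b^η_{z,ω}) / b^η_{z,ω}`. -/
def gfn (ν : ℂ → ℝ) (p : ℝ) (ω : ℂ → ℝ) (η : ℝ) (f : ℂ → ℂ) (z ζ : ℂ) : ℂ :=
  Pw ν (fun u => conj (f u) * bnrm p ω η z u) ζ / bnrm p ω η z ζ

end

section AuxLemmas

lemma what_intervalIntegrable (ω : ℂ → ℝ) (hωp : WhatPos ω) {r : ℝ} (h0 : 0 ≤ r) (h1 : r < 1) :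
    IntervalIntegrable (fun s : ℝ => ω (s : ℂ)) MeasureTheory.volume r 1 := by
  by_contra h
  have h2 : what ω r = 0 := intervalIntegral.integral_undef h
  have h3 := hωp r h0 h1
  rw [h2] at h3
  exact lt_irrefl _ h3

lemma what_anti (ω : ℂ → ℝ) (hω : RadialWeight ω) (hωp : WhatPos ω) {a b : ℝ}
    (ha : 0 ≤ a) (hab : a ≤ b) (hb : b < 1) : what ω b ≤ what ω a := by
  have hb1 : a < 1 := lt_of_le_of_lt hab hb
  have hI := what_intervalIntegrable ω hωp ha hb1
  have hsub1 : Set.uIcc a b ⊆ Set.uIcc a 1 := by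
    rw [Set.uIcc_of_le hab, Set.uIcc_of_le hb1.le]
    exact Set.Icc_subset_Icc le_rfl hb.le
  have hsub2 : Set.uIcc b 1 ⊆ Set.uIcc a 1 := by
    rw [Set.uIcc_of_le hb.le, Set.uIcc_of_le hb1.le]
    exact Set.Icc_subset_Icc hab le_rfl
  have hI1 : IntervalIntegrable (fun s : ℝ => ω (s : ℂ)) MeasureTheory.volume a b :=
    hI.mono_set hsub1
  have hI2 : IntervalIntegrable (fun s : ℝ => ω (s : ℂ)) MeasureTheory.volume b 1 :=
    hI.mono_set hsub2
  have hsplit : (∫ s in a..b, ω (s : ℂ)) + (∫ s in b..(1:ℝ), ω (s : ℂ)) = ∫ s in a..(1:ℝ), ω (s : ℂ) :=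
    intervalIntegral.integral_add_adjacent_intervals hI1 hI2
  have hnn : 0 ≤ ∫ s in a..b, ω (s : ℂ) :=
    intervalIntegral.integral_nonneg hab (fun x _ => hω.1 _)
  unfold what
  linarith

end AuxLemmas

/-- Lemma B: `ω ∈ Ď` iff `ω̂(t) ≤ C((1−t)/(1−r))^α ω̂(r)` for `0 ≤ r ≤ t < 1`. -/
theorem Dcheck_iff_exponent (ω : ℂ → ℝ) (hω : RadialWeight ω) (hωp : WhatPos ω) :
    Dcheck ω ↔ ∃ C > (0 : ℝ), ∃ α > (0 : ℝ), ∀ r t : ℝ, 0 ≤ r → r ≤ t → t < 1 →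
      what ω t ≤ C * ((1 - t) / (1 - r)) ^ α * what ω r := by
  constructor
  · rintro ⟨K, hK, C, hC, hD⟩
    have hK0 : (0:ℝ) < K := by linarith
    have hC0 : (0:ℝ) < C := by linarith
    have hα : 0 < Real.log C / Real.log K := div_pos (Real.log_pos hC) (Real.log_pos hK)
    refine ⟨C, hC0, Real.log C / Real.log K, hα, ?_⟩
    set α := Real.log C / Real.log K with hαdef
    have hKα : K ^ α = C := by
      rw [Real.rpow_def_of_pos hK0]
      have hlogK : Real.log K ≠ 0 := ne_of_gt (Real.log_pos hK)
      have : Real.log K * α = Real.log C := by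
        rw [hαdef]; field_simp
      rw [this, Real.exp_log hC0]
    -- iteration claim
    have claim : ∀ n : ℕ, ∀ r : ℝ, 0 ≤ r → r < 1 →
        C ^ n * what ω (1 - (1 - r) / K ^ n) ≤ what ω r := by
      intro n
      induction n with
      | zero => intro r hr h1; simp
      | succ n ih =>
        intro r hr h1
        have hr'0 : r ≤ 1 - (1 - r) / K := by
          have h2 : (1 - r) / K ≤ 1 - r := div_le_self (by linarith) (by linarith)
          linarith
        have hr'1 : 1 - (1 - r) / K < 1 := by
          have h2 : 0 < (1 - r) / K := div_pos (by linarith) hK0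
          linarith
        have heq : 1 - (1 - r) / K ^ (n + 1) = 1 - (1 - (1 - (1 - r) / K)) / K ^ n := by
          have hKn : (K:ℝ) ^ n ≠ 0 := pow_ne_zero _ (ne_of_gt hK0)
          field_simp
          ring
        rw [heq]
        have h3 := ih (1 - (1 - r) / K) (le_trans hr hr'0) hr'1
        have h4 := hD r hr h1
        have h5 : (1 + r) / 2 = (1 + r) / 2 := rfl
        calc C ^ (n + 1) * what ω (1 - (1 - (1 - (1 - r) / K)) / K ^ n)
            = C * (C ^ n * what ω (1 - (1 - (1 - (1 - r) / K)) / K ^ n)) := by ring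
          _ ≤ C * what ω (1 - (1 - r) / K) := by
              exact mul_le_mul_of_nonneg_left h3 hC0.le
          _ ≤ what ω r := h4
    intro r t hr hrt ht
    have hr1 : r < 1 := lt_of_le_of_lt hrt ht
    have ht0 : (0:ℝ) < 1 - t := by linarith
    have hr0 : (0:ℝ) < 1 - r := by linarith
    set x := (1 - r) / (1 - t) with hxdef
    have hx1 : 1 ≤ x := (one_le_div ht0).mpr (by linarith)
    have hx0 : 0 < x := lt_of_lt_of_le one_pos hx1
    have hlb0 : 0 ≤ Real.logb K x := Real.logb_nonneg hK hx1
    set n := ⌊Real.logb K x⌋₊ with hndef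
    have hn1 : (n:ℝ) ≤ Real.logb K x := Nat.floor_le hlb0
    have hn2 : Real.logb K x < (n:ℝ) + 1 := Nat.lt_floor_add_one _
    have hKn_le : (K:ℝ) ^ n ≤ x := by
      have h2 : K ^ ((n:ℝ)) ≤ K ^ (Real.logb K x) :=
        (Real.rpow_le_rpow_left_iff hK).mpr hn1
      rw [Real.rpow_logb hK0 (ne_of_gt hK) hx0, Real.rpow_natCast] at h2
      exact h2
    have hx_lt : x < (K:ℝ) ^ (n + 1) := by
      have h2 : K ^ (Real.logb K x) < K ^ ((n:ℝ) + 1) :=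
        (Real.rpow_lt_rpow_left_iff hK).mpr hn2
      rw [Real.rpow_logb hK0 (ne_of_gt hK) hx0] at h2
      have h3 : K ^ ((n:ℝ) + 1) = (K:ℝ) ^ (n + 1) := by
        rw [show ((n:ℝ) + 1) = ((n + 1 : ℕ) : ℝ) by push_cast; ring, Real.rpow_natCast]
      rwa [h3] at h2
    have hKnpos : (0:ℝ) < K ^ n := pow_pos hK0 n
    have hKn1pos : (0:ℝ) < K ^ (n + 1) := pow_pos hK0 (n + 1)
    have hCnpos : (0:ℝ) < C ^ n := pow_pos hC0 n
    -- s := 1 - (1-r)/K^n satisfies r ≤ s ≤ t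
    have hs_le_t : 1 - (1 - r) / K ^ n ≤ t := by
      have h2 : (1 - r) / x ≤ (1 - r) / K ^ n :=
        div_le_div_of_nonneg_left hr0.le hKnpos hKn_le
      have h3 : (1 - r) / x = 1 - t := by
        rw [hxdef]; field_simp
      linarith
    have hs_ge : r ≤ 1 - (1 - r) / K ^ n := by
      have hK1n : (1:ℝ) ≤ K ^ n := one_le_pow₀ hK.le
      have h2 : (1 - r) / K ^ n ≤ 1 - r := div_le_self (by linarith) hK1n
      linarith
    have hclaim := claim n r hr hr1
    have hmono : what ω t ≤ what ω (1 - (1 - r) / K ^ n) :=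
      what_anti ω hω hωp (le_trans hr hs_ge) hs_le_t ht
    have hkey : C ^ n * what ω t ≤ what ω r := by
      calc C ^ n * what ω t ≤ C ^ n * what ω (1 - (1 - r) / K ^ n) :=
            mul_le_mul_of_nonneg_left hmono hCnpos.le
        _ ≤ what ω r := hclaim
    -- relate C^n and ((1-t)/(1-r))^α
    have hy : (1 - t) / (1 - r) = x⁻¹ := by
      rw [hxdef]; field_simp
    have hyα : ((C:ℝ) ^ (n + 1))⁻¹ ≤ x⁻¹ ^ α := by
      have h2 : ((K:ℝ) ^ (n + 1))⁻¹ ≤ x⁻¹ := by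
        apply inv_anti₀ hx0 hx_lt.le
      have h3 : (((K:ℝ) ^ (n + 1))⁻¹) ^ α ≤ x⁻¹ ^ α :=
        Real.rpow_le_rpow (by positivity) h2 hα.le
      have h4 : (((K:ℝ) ^ (n + 1))⁻¹) ^ α = ((C:ℝ) ^ (n + 1))⁻¹ := by
        rw [← Real.rpow_natCast K (n + 1), ← Real.rpow_natCast C (n + 1),
          Real.inv_rpow (Real.rpow_nonneg hK0.le _), ← Real.rpow_mul hK0.le,
          mul_comm ((n + 1 : ℕ) : ℝ) α, Real.rpow_mul hK0.le, hKα]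
      rwa [h4] at h3
    have hwr : 0 < what ω r := hωp r hr hr1
    have hfinal : what ω r / C ^ n ≤ C * x⁻¹ ^ α * what ω r := by
      have h2 : C * ((C:ℝ) ^ (n + 1))⁻¹ = (C ^ n)⁻¹ := by
        rw [pow_succ]
        field_simp
      calc what ω r / C ^ n = C * ((C:ℝ) ^ (n + 1))⁻¹ * what ω r := by
            rw [h2]; field_simp
        _ ≤ C * x⁻¹ ^ α * what ω r := by
            apply mul_le_mul_of_nonneg_right _ hwr.le
            exact mul_le_mul_of_nonneg_left hyα hC0.le
    rw [hy]
    have h6 : what ω t ≤ what ω r / C ^ n := by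
      rw [le_div_iff₀ hCnpos]; linarith [hkey]
    linarith
  · rintro ⟨C, hC0, α, hα, h⟩
    set K := max 2 ((2 * C) ^ α⁻¹) with hKdef
    have hK2 : (2:ℝ) ≤ K := le_max_left _ _
    have hK1 : (1:ℝ) < K := lt_of_lt_of_le one_lt_two hK2
    have hK0 : (0:ℝ) < K := by linarith
    refine ⟨K, hK1, 2, one_lt_two, ?_⟩
    intro r hr h1
    have hrt : r ≤ 1 - (1 - r) / K := by
      have h2 : (1 - r) / K ≤ 1 - r := div_le_self (by linarith) hK1.le
      linarith
    have ht1 : 1 - (1 - r) / K < 1 := by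
      have h2 : 0 < (1 - r) / K := div_pos (by linarith) hK0
      linarith
    have hq : (1 - (1 - (1 - r) / K)) / (1 - r) = K⁻¹ := by
      have hr0 : (1:ℝ) - r ≠ 0 := ne_of_gt (by linarith)
      field_simp
      ring
    have h2 := h r (1 - (1 - r) / K) hr hrt ht1
    rw [hq] at h2
    have h2C : (0:ℝ) < 2 * C := by linarith
    have hKα : 2 * C ≤ K ^ α := by
      have h3 : ((2 * C) ^ α⁻¹) ^ α ≤ K ^ α :=
        Real.rpow_le_rpow (Real.rpow_nonneg h2C.le _) (le_max_right _ _) hα.le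
      rwa [← Real.rpow_mul h2C.le, inv_mul_cancel₀ (ne_of_gt hα), Real.rpow_one] at h3
    have hKαpos : (0:ℝ) < K ^ α := Real.rpow_pos_of_pos hK0 _
    have h4 : C * K⁻¹ ^ α ≤ 1 / 2 := by
      rw [Real.inv_rpow hK0.le]
      rw [mul_inv_le_iff₀ hKαpos] -- C ≤ 1/2 * K^α ?
      linarith
    have hwr : 0 < what ω r := hωp r hr h1
    have h5 : C * K⁻¹ ^ α * what ω r ≤ 1 / 2 * what ω r :=
      mul_le_mul_of_nonneg_right h4 hwr.le
    linarith
end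

section
/- Let ω be a radial weight with ω̂ > 0 on [0,1). Then the following are equivalent: (a) ω ∈ D̂; (b) there exist a radial weight ν ∈ D and a constant C = C(ω,ν) > 0 such that ∫_0^r ω(t)/(ω̂(t)ν̂(t)) dt ≤ C/ν̂(r) for all 0 ≤ r < 1; (c) for every radial weight ν ∈ D there exists a constant C = C(ω,ν) > 0 such that ∫_0^r ω(t)/(ω̂(t)ν̂(t)) dt ≤ C/ν̂(r) for all 0 ≤ r < 1. -/
open MeasureTheory Set
open scoped ENNReal ComplexConjugate

namespace DIL

variable {ω ν : ℂ → ℝ}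

lemma ii01 (hωp : WhatPos ω) : IntervalIntegrable (fun t : ℝ => ω (t:ℂ)) volume 0 1 := by
  by_contra h
  have h0 : what ω 0 = 0 := intervalIntegral.integral_undef h
  have := hωp 0 le_rfl one_pos
  linarith

lemma ii_sub (hωp : WhatPos ω) {a b : ℝ} (ha : 0 ≤ a) (ha1 : a ≤ 1) (hb : 0 ≤ b) (hb1 : b ≤ 1) :
    IntervalIntegrable (fun t : ℝ => ω (t:ℂ)) volume a b :=
  (ii01 hωp).mono_set (uIcc_subset_uIcc (by rw [Set.uIcc_of_le zero_le_one]; exact ⟨ha, ha1⟩)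
    (by rw [Set.uIcc_of_le zero_le_one]; exact ⟨hb, hb1⟩))

lemma what_split (hωp : WhatPos ω) {a b : ℝ} (ha : 0 ≤ a) (hab : a ≤ b) (hb1 : b ≤ 1) :
    what ω a = (∫ t in a..b, ω (t:ℂ)) + what ω b := by
  have := intervalIntegral.integral_add_adjacent_intervals
    (ii_sub hωp ha (hab.trans hb1) (ha.trans hab) hb1)
    (ii_sub hωp (ha.trans hab) hb1 zero_le_one le_rfl)
  rw [what, what, ← this]

lemma what_mono (hnn : ∀ z, 0 ≤ ω z) (hωp : WhatPos ω) {a b : ℝ} (ha : 0 ≤ a) (hab : a ≤ b)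
    (hb1 : b ≤ 1) : what ω b ≤ what ω a := by
  have h := what_split hωp ha hab hb1
  have : 0 ≤ ∫ t in a..b, ω (t:ℂ) := intervalIntegral.integral_nonneg hab (fun u _ => hnn _)
  linarith

lemma what_nonneg (hnn : ∀ z, 0 ≤ ω z) {r : ℝ} (hr : r ≤ 1) : 0 ≤ what ω r :=
  intervalIntegral.integral_nonneg hr (fun u _ => hnn _)

lemma what_contOn (hωp : WhatPos ω) : ContinuousOn (what ω) (Icc 0 1) := by
  have hi : IntegrableOn (fun t : ℝ => ω (t:ℂ)) (uIcc 0 1) volume := by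
    rw [Set.uIcc_of_le zero_le_one, integrableOn_Icc_iff_integrableOn_Ioc]
    exact (ii01 hωp).1
  have hc := intervalIntegral.continuousOn_primitive_interval hi
  rw [Set.uIcc_of_le zero_le_one] at hc
  refine ContinuousOn.congr ((continuousOn_const (c := what ω 0)).sub hc) ?_
  intro r hr
  have h := what_split hωp le_rfl hr.1 hr.2
  simp only [what] at h ⊢
  rw [h]; simp only [Pi.sub_apply]; ring

lemma ii_div (hωp : WhatPos ω) {a b : ℝ} (ha : 0 ≤ a) (hab : a ≤ b) (hb : b < 1) :
    IntervalIntegrable (fun t : ℝ => ω (t:ℂ) / what ω t) volume a b := by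
  have hcont : ContinuousOn (fun t : ℝ => (what ω t)⁻¹) (uIcc a b) := by
    rw [Set.uIcc_of_le hab]
    refine ContinuousOn.inv₀ ((what_contOn hωp).mono (Icc_subset_Icc ha hb.le)) ?_
    intro t ht
    exact (hωp t (ha.trans ht.1) (lt_of_le_of_lt ht.2 hb)).ne'
  simpa [div_eq_mul_inv] using
    (ii_sub hωp ha (hab.trans hb.le) (ha.trans hab) hb.le).mul_continuousOn hcont

lemma ii_div2 (hωp : WhatPos ω) (hνp : WhatPos ν) {a b : ℝ} (ha : 0 ≤ a) (hab : a ≤ b)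
    (hb : b < 1) :
    IntervalIntegrable (fun t : ℝ => ω (t:ℂ) / (what ω t * what ν t)) volume a b := by
  have hcont : ContinuousOn (fun t : ℝ => (what ω t * what ν t)⁻¹) (uIcc a b) := by
    rw [Set.uIcc_of_le hab]
    refine ContinuousOn.inv₀ (ContinuousOn.mul
      ((what_contOn hωp).mono (Icc_subset_Icc ha hb.le))
      ((what_contOn hνp).mono (Icc_subset_Icc ha hb.le))) ?_
    intro t ht
    exact (mul_pos (hωp t (ha.trans ht.1) (lt_of_le_of_lt ht.2 hb))
      (hνp t (ha.trans ht.1) (lt_of_le_of_lt ht.2 hb))).ne'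
  simpa [div_eq_mul_inv] using
    (ii_sub hωp ha (hab.trans hb.le) (ha.trans hab) hb.le).mul_continuousOn hcont

lemma lowbd (hnn : ∀ z, 0 ≤ ω z) (hωp : WhatPos ω) {a b : ℝ} (ha : 0 ≤ a) (hab : a ≤ b)
    (hb : b < 1) :
    1 - what ω b / what ω a ≤ ∫ t in a..b, ω (t:ℂ) / what ω t := by
  have hpa := hωp a ha (lt_of_le_of_lt hab hb)
  have key : (∫ t in a..b, ω (t:ℂ) / what ω a) ≤ ∫ t in a..b, ω (t:ℂ) / what ω t := by
    refine intervalIntegral.integral_mono_on hab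
      ((ii_sub hωp ha (hab.trans hb.le) (ha.trans hab) hb.le).div_const _)
      (ii_div hωp ha hab hb) ?_
    intro t ht
    have hpt := hωp t (ha.trans ht.1) (lt_of_le_of_lt ht.2 hb)
    have hle : what ω t ≤ what ω a := what_mono hnn hωp ha ht.1 (ht.2.trans hb.le)
    gcongr
    exact hnn _
  have hval : (∫ t in a..b, ω (t:ℂ) / what ω a) = 1 - what ω b / what ω a := by
    rw [intervalIntegral.integral_div]
    have hs := what_split hωp ha hab hb.le
    field_simp
    linarith
  linarith

lemma halve (hnn : ∀ z, 0 ≤ ω z) (hωp : WhatPos ω) :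
    ∀ n : ℕ, ∀ a b : ℝ, 0 ≤ a → a ≤ b → b < 1 →
      (∫ t in a..b, ω (t:ℂ) / what ω t) ≤ (n : ℝ) / 2 → what ω a ≤ 2 ^ n * what ω b := by
  intro n
  induction n with
  | zero =>
    intro a b ha hab hb hI
    have hl := lowbd hnn hωp ha hab hb
    have hpa := hωp a ha (lt_of_le_of_lt hab hb)
    simp only [Nat.cast_zero, zero_div] at hI
    have : 1 ≤ what ω b / what ω a := by linarith
    rw [le_div_iff₀ hpa] at this
    simpa using this
  | succ n ih =>
    intro a b ha hab hb hI
    have hpa := hωp a ha (lt_of_le_of_lt hab hb)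
    have hpb := hωp b (ha.trans hab) hb
    by_cases hcase : what ω a ≤ 2 * what ω b
    · have h2 : (2:ℝ) ≤ 2 ^ (n+1) := by
        calc (2:ℝ) = 2^1 := (pow_one 2).symm
        _ ≤ 2^(n+1) := by
          apply pow_le_pow_right₀ (by norm_num)
          omega
      nlinarith [hpb.le]
    · push_neg at hcase
      have hmem : what ω a / 2 ∈ Icc (what ω b) (what ω a) := ⟨by linarith, by linarith⟩
      obtain ⟨s, hs, hws⟩ := intermediate_value_Icc' hab
        ((what_contOn hωp).mono (Icc_subset_Icc ha hb.le)) hmem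
      have hs0 : 0 ≤ s := ha.trans hs.1
      have hs1 : s < 1 := lt_of_le_of_lt hs.2 hb
      have hlow : (1:ℝ)/2 ≤ ∫ t in a..s, ω (t:ℂ) / what ω t := by
        have := lowbd hnn hωp ha hs.1 hs1
        rw [hws] at this
        have : 1 - (1:ℝ)/2 ≤ ∫ t in a..s, ω (t:ℂ) / what ω t := by
          have hdv : what ω a / 2 / what ω a = 1/2 := by field_simp
          rwa [hdv] at this
        linarith
      have hadj : (∫ t in a..s, ω (t:ℂ) / what ω t) + (∫ t in s..b, ω (t:ℂ) / what ω t)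
          = ∫ t in a..b, ω (t:ℂ) / what ω t :=
        intervalIntegral.integral_add_adjacent_intervals (ii_div hωp ha hs.1 hs1)
          (ii_div hωp hs0 hs.2 hb)
      have hrest : (∫ t in s..b, ω (t:ℂ) / what ω t) ≤ (n : ℝ) / 2 := by
        push_cast at hI ⊢
        linarith
      have := ih s b hs0 hs.2 hb hrest
      rw [hws] at this
      rw [pow_succ]
      nlinarith

lemma dhat_iter (hωp : WhatPos ω) {C : ℝ} (hC : 1 ≤ C)
    (h : ∀ r : ℝ, 0 ≤ r → r < 1 → what ω r ≤ C * what ω ((1 + r) / 2)) :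
    ∀ m : ℕ, ∀ r : ℝ, 0 ≤ r → r < 1 → what ω r ≤ C ^ m * what ω (1 - (1 - r) / 2 ^ m) := by
  intro m
  induction m with
  | zero => intro r hr hr1; simp
  | succ m ih =>
    intro r hr hr1
    set r' := 1 - (1 - r) / 2 ^ m with hr'def
    have h2m : (1:ℝ) ≤ 2 ^ m := one_le_pow₀ (by norm_num)
    have h2mpos : (0:ℝ) < 2 ^ m := by positivity
    have hr'0 : 0 ≤ r' := by
      have : (1 - r) / 2 ^ m ≤ 1 - r := by
        rw [div_le_iff₀ h2mpos]; nlinarith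
      simp only [hr'def]; linarith
    have hr'1 : r' < 1 := by
      have : 0 < (1 - r) / 2 ^ m := div_pos (by linarith) h2mpos
      simp only [hr'def]; linarith
    have step := h r' hr'0 hr'1
    have heq : (1 + r') / 2 = 1 - (1 - r) / 2 ^ (m + 1) := by
      simp only [hr'def]; rw [pow_succ]; field_simp; ring
    rw [heq] at step
    have hbase := ih r hr hr1
    have hCm : (0:ℝ) ≤ C ^ m := by positivity
    calc what ω r ≤ C ^ m * what ω r' := hbase
    _ ≤ C ^ m * (C * what ω (1 - (1 - r) / 2 ^ (m + 1))) := by gcongr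
    _ = C ^ (m+1) * what ω (1 - (1 - r) / 2 ^ (m + 1)) := by ring

lemma P2 (hnnω : ∀ z, 0 ≤ ω z) (hωp : WhatPos ω)
    (hnnν : ∀ z, 0 ≤ ν z) (hνp : WhatPos ν) (hνD : Dhat ν)
    {C : ℝ} (hC : 0 < C)
    (hb : ∀ r : ℝ, 0 ≤ r → r < 1 →
      (∫ t in (0:ℝ)..r, ω (t:ℂ) / (what ω t * what ν t)) ≤ C / what ν r) :
    Dhat ω := by
  obtain ⟨Cν, hCν, hDν⟩ := hνD
  set M := C * Cν with hMdef
  set n := Nat.ceil (2 * M) with hndef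
  have h2n : (1:ℝ) ≤ 2 ^ n := one_le_pow₀ (by norm_num)
  refine ⟨2 ^ n + 1, by linarith, ?_⟩
  intro r hr hr1
  set s := (1 + r) / 2 with hs
  have hrs : r ≤ s := by simp only [hs]; linarith
  have hs1 : s < 1 := by simp only [hs]; linarith
  have hs0 : 0 ≤ s := hr.trans hrs
  have hpνr := hνp r hr hr1
  have hpνs := hνp s hs0 hs1
  have hA : (∫ t in r..s, ω (t:ℂ) / (what ω t * what ν t)) ≤ C / what ν s := by
    have hadj := intervalIntegral.integral_add_adjacent_intervals
      (ii_div2 hωp hνp le_rfl hr hr1) (ii_div2 hωp hνp hr hrs hs1)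
    have hnn0r : 0 ≤ ∫ t in (0:ℝ)..r, ω (t:ℂ) / (what ω t * what ν t) :=
      intervalIntegral.integral_nonneg hr (fun t ht => div_nonneg (hnnω _)
        (mul_nonneg (what_nonneg hnnω (ht.2.trans hr1.le))
          (what_nonneg hnnν (ht.2.trans hr1.le))))
    have := hb s hs0 hs1
    linarith
  have hB : (∫ t in r..s, ω (t:ℂ) / what ω t) ≤ what ν r * (C / what ν s) := by
    have hmono : (∫ t in r..s, ω (t:ℂ) / what ω t)
        ≤ ∫ t in r..s, what ν r * (ω (t:ℂ) / (what ω t * what ν t)) := by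
      refine intervalIntegral.integral_mono_on hrs (ii_div hωp hr hrs hs1)
        ((ii_div2 hωp hνp hr hrs hs1).const_mul _) ?_
      intro t ht
      have ht1 : t < 1 := lt_of_le_of_lt ht.2 hs1
      have ht0 : 0 ≤ t := hr.trans ht.1
      have hpωt := hωp t ht0 ht1
      have hpνt := hνp t ht0 ht1
      have hle : what ν t ≤ what ν r := what_mono hnnν hνp hr ht.1 ht1.le
      have hrw : what ν r * (ω (t:ℂ) / (what ω t * what ν t))
          = (ω (t:ℂ) / what ω t) * (what ν r / what ν t) := by
        field_simp
      rw [hrw]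
      have h1 : 1 ≤ what ν r / what ν t := (one_le_div hpνt).2 hle
      have h2 : 0 ≤ ω (t:ℂ) / what ω t := div_nonneg (hnnω _) hpωt.le
      nlinarith
    have hint : (∫ t in r..s, what ν r * (ω (t:ℂ) / (what ω t * what ν t)))
        = what ν r * ∫ t in r..s, ω (t:ℂ) / (what ω t * what ν t) :=
      intervalIntegral.integral_const_mul _ _
    calc (∫ t in r..s, ω (t:ℂ) / what ω t)
        ≤ ∫ t in r..s, what ν r * (ω (t:ℂ) / (what ω t * what ν t)) := hmono
    _ = what ν r * ∫ t in r..s, ω (t:ℂ) / (what ω t * what ν t) := hint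
    _ ≤ what ν r * (C / what ν s) := mul_le_mul_of_nonneg_left hA hpνr.le
  have hνhat : what ν r ≤ Cν * what ν s := hDν r hr hr1
  have hM : (∫ t in r..s, ω (t:ℂ) / what ω t) ≤ (n : ℝ) / 2 := by
    have h1 : what ν r * (C / what ν s) ≤ M := by
      rw [hMdef, mul_div_assoc']
      rw [div_le_iff₀ hpνs]
      nlinarith
    have h2 : M ≤ (n : ℝ) / 2 := by
      have := Nat.le_ceil (2 * M)
      rw [← hndef] at this
      linarith
    linarith
  have hhalf := halve hnnω hωp n r s hr hrs hs1 hM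
  have hwsnn : 0 ≤ what ω s := what_nonneg hnnω hs1.le
  linarith

lemma P1 (hnnω : ∀ z, 0 ≤ ω z) (hωp : WhatPos ω) (hD : Dhat ω)
    (hnnν : ∀ z, 0 ≤ ν z) (hνp : WhatPos ν) (hνD : Dclass ν) :
    ∃ C > (0:ℝ), ∀ r : ℝ, 0 ≤ r → r < 1 →
      (∫ t in (0:ℝ)..r, ω (t:ℂ) / (what ω t * what ν t)) ≤ C / what ν r := by
  obtain ⟨Cω, hCω, hω1⟩ := hD
  obtain ⟨Cν', hCν', hν1⟩ := hνD.1
  obtain ⟨K, hK, Cν, hCν, hν2⟩ := hνD.2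
  obtain ⟨m, hm⟩ := pow_unbounded_of_one_lt K (by norm_num : (1:ℝ) < 2)
  have hKpos : (0:ℝ) < K := lt_trans one_pos hK
  set q : ℝ := 1 / K with hq
  have hq0 : 0 < q := by positivity
  have hq1 : q < 1 := by rw [hq, div_lt_one hKpos]; exact hK
  set R : ℕ → ℝ := fun j => 1 - q ^ j with hR
  have hR0 : R 0 = 0 := by simp [hR]
  have hRa : ∀ j, 0 ≤ R j := by
    intro j
    have : q ^ j ≤ 1 := pow_le_one₀ hq0.le hq1.le
    simp only [hR]; linarith
  have hRb : ∀ j, R j < 1 := by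
    intro j
    have : 0 < q ^ j := pow_pos hq0 j
    simp only [hR]; linarith
  have hRmono : ∀ j, R j ≤ R (j + 1) := by
    intro j
    have : q ^ (j+1) ≤ q ^ j := pow_le_pow_of_le_one hq0.le hq1.le (by omega)
    simp only [hR]; linarith
  have hRsucc : ∀ j, 1 - (1 - R j) / K = R (j + 1) := by
    intro j
    simp only [hR, hq]
    rw [pow_succ]
    field_simp
    ring
  -- dyadic step bound from a Dhat-type hypothesis
  have hstep : ∀ (μ : ℂ → ℝ), (∀ z, 0 ≤ μ z) → WhatPos μ → ∀ Cμ : ℝ, 1 ≤ Cμ →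
      (∀ r : ℝ, 0 ≤ r → r < 1 → what μ r ≤ Cμ * what μ ((1 + r) / 2)) →
      ∀ j, what μ (R j) ≤ Cμ ^ m * what μ (R (j + 1)) := by
    intro μ hμn hμp Cμ hCμ hh j
    have hiter := dhat_iter hμp hCμ hh m (R j) (hRa j) (hRb j)
    set p := 1 - (1 - R j) / 2 ^ m with hp
    have h2m : (0:ℝ) < 2 ^ m := by positivity
    have h1Rj : 0 < 1 - R j := by have := hRb j; linarith
    have hple : R (j + 1) ≤ p := by
      rw [← hRsucc j]
      have : (1 - R j) / 2 ^ m ≤ (1 - R j) / K :=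
        div_le_div_of_nonneg_left h1Rj.le hKpos hm.le
      simp only [hp]; linarith
    have hp1 : p ≤ 1 := by
      have : 0 ≤ (1 - R j) / 2 ^ m := by positivity
      simp only [hp]; linarith
    have := what_mono hμn hμp (hRa (j+1)) hple hp1
    have hCm : (0:ℝ) ≤ Cμ ^ m := by positivity
    nlinarith
  set B : ℝ := Cω ^ m with hB
  set B' : ℝ := Cν' ^ m with hB'
  have hB1 : 1 ≤ B := one_le_pow₀ hCω.le
  have hB'1 : 1 ≤ B' := one_le_pow₀ hCν'.le
  set Cst : ℝ := B * Cν / (Cν - 1) with hCst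
  have hCν1 : 0 < Cν - 1 := by linarith
  have hCstpos : 0 < Cst := by
    apply div_pos (by nlinarith) hCν1
  have claim1 : ∀ j, (∫ t in (0:ℝ)..(R j), ω (t:ℂ) / (what ω t * what ν t))
      ≤ Cst / what ν (R j) := by
    intro j
    induction j with
    | zero =>
      rw [hR0]
      simp only [intervalIntegral.integral_same]
      exact div_nonneg hCstpos.le (hνp 0 le_rfl one_pos).le
    | succ j ih =>
      have pνj := hνp (R j) (hRa j) (hRb j)
      have pνj1 := hνp (R (j+1)) (hRa (j+1)) (hRb (j+1))
      have pωj1 := hωp (R (j+1)) (hRa (j+1)) (hRb (j+1))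
      have hadj := intervalIntegral.integral_add_adjacent_intervals
        (ii_div2 hωp hνp le_rfl (hRa j) (hRb j))
        (ii_div2 hωp hνp (hRa j) (hRmono j) (hRb (j+1)))
      have hω2 : what ω (R j) ≤ B * what ω (R (j+1)) := hstep ω hnnω hωp Cω hCω.le hω1 j
      have hpiece : (∫ t in (R j)..(R (j+1)), ω (t:ℂ) / (what ω t * what ν t))
          ≤ B / what ν (R (j+1)) := by
        have hmono : (∫ t in (R j)..(R (j+1)), ω (t:ℂ) / (what ω t * what ν t))
            ≤ ∫ t in (R j)..(R (j+1)),
                ω (t:ℂ) / (what ω (R (j+1)) * what ν (R (j+1))) := by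
          refine intervalIntegral.integral_mono_on (hRmono j)
            (ii_div2 hωp hνp (hRa j) (hRmono j) (hRb (j+1)))
            ((ii_sub hωp (hRa j) ((hRb j).le.trans (le_refl 1)) (hRa (j+1))
              (hRb (j+1)).le).div_const _) ?_
          intro t ht
          have ht0 : 0 ≤ t := (hRa j).trans ht.1
          have ht1 : t < 1 := lt_of_le_of_lt ht.2 (hRb (j+1))
          have hωt := hωp t ht0 ht1
          have hνt := hνp t ht0 ht1
          have h1 : what ω (R (j+1)) ≤ what ω t := what_mono hnnω hωp ht0 ht.2 (hRb (j+1)).le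
          have h2 : what ν (R (j+1)) ≤ what ν t := what_mono hnnν hνp ht0 ht.2 (hRb (j+1)).le
          exact div_le_div_of_nonneg_left (hnnω _) (mul_pos pωj1 pνj1)
            (mul_le_mul h1 h2 pνj1.le hωt.le)
        have hval : (∫ t in (R j)..(R (j+1)),
              ω (t:ℂ) / (what ω (R (j+1)) * what ν (R (j+1))))
            = (what ω (R j) - what ω (R (j+1))) / (what ω (R (j+1)) * what ν (R (j+1))) := by
          rw [intervalIntegral.integral_div]
          have := what_split hωp (hRa j) (hRmono j) (hRb (j+1)).le
          rw [show (∫ t in (R j)..(R (j+1)), ω (t:ℂ)) = what ω (R j) - what ω (R (j+1)) by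
            linarith]
        have hfin : (what ω (R j) - what ω (R (j+1))) / (what ω (R (j+1)) * what ν (R (j+1)))
            ≤ B / what ν (R (j+1)) := by
          rw [div_le_div_iff₀ (mul_pos pωj1 pνj1) pνj1]
          nlinarith
        linarith
      have hdch : Cν * what ν (R (j+1)) ≤ what ν (R j) := by
        have := hν2 (R j) (hRa j) (hRb j)
        rwa [hRsucc j] at this
      have hih2 : Cst / what ν (R j) ≤ Cst / (Cν * what ν (R (j+1))) := by
        exact div_le_div_of_nonneg_left hCstpos.le
          (mul_pos (lt_trans one_pos hCν) pνj1) hdch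
      have hsum : Cst / (Cν * what ν (R (j+1))) + B / what ν (R (j+1))
          = Cst / what ν (R (j+1)) := by
        rw [hCst]
        field_simp
        ring
      linarith
  have claim2 : ∀ j, ∀ r : ℝ, 0 ≤ r → r ≤ R j →
      (∫ t in (0:ℝ)..r, ω (t:ℂ) / (what ω t * what ν t)) ≤ Cst * B' / what ν r := by
    intro j
    induction j with
    | zero =>
      intro r hr hrR
      rw [hR0] at hrR
      have : r = 0 := le_antisymm hrR hr
      subst this
      simp only [intervalIntegral.integral_same]
      have := hνp 0 le_rfl one_pos
      positivity
    | succ j ih =>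
      intro r hr hrR
      rcases le_or_gt r (R j) with h | h
      · exact ih r hr h
      · have hr1 : r < 1 := lt_of_le_of_lt hrR (hRb (j+1))
        have pνr := hνp r hr hr1
        have pνj1 := hνp (R (j+1)) (hRa (j+1)) (hRb (j+1))
        have hF : (∫ t in (0:ℝ)..r, ω (t:ℂ) / (what ω t * what ν t))
            ≤ ∫ t in (0:ℝ)..(R (j+1)), ω (t:ℂ) / (what ω t * what ν t) := by
          have hadj := intervalIntegral.integral_add_adjacent_intervals
            (ii_div2 hωp hνp le_rfl hr hr1)
            (ii_div2 hωp hνp hr hrR (hRb (j+1)))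
          have hnn : 0 ≤ ∫ t in r..(R (j+1)), ω (t:ℂ) / (what ω t * what ν t) := by
            refine intervalIntegral.integral_nonneg hrR ?_
            intro t ht
            exact div_nonneg (hnnω _) (mul_nonneg
              (what_nonneg hnnω (ht.2.trans (hRb (j+1)).le))
              (what_nonneg hnnν (ht.2.trans (hRb (j+1)).le)))
          linarith
        have hc1 := claim1 (j+1)
        have hν3 : what ν r ≤ B' * what ν (R (j+1)) := by
          have h1 : what ν r ≤ what ν (R j) := what_mono hnnν hνp (hRa j) h.le hr1.le
          have h2 := hstep ν hnnν hνp Cν' hCν'.le hν1 j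
          linarith
        have : Cst / what ν (R (j+1)) ≤ Cst * B' / what ν r := by
          rw [div_le_div_iff₀ pνj1 pνr]
          nlinarith
        linarith
  obtain ⟨C0, hC0, hfin⟩ : ∃ C > (0:ℝ), C = Cst * B' := ⟨Cst * B', by nlinarith, rfl⟩
  refine ⟨Cst * B', by nlinarith, ?_⟩
  intro r hr hr1
  obtain ⟨j, hj⟩ := exists_pow_lt_of_lt_one (by linarith : (0:ℝ) < 1 - r) hq1
  have : r ≤ R j := by simp only [hR]; linarith
  exact claim2 j r hr this


lemma what_one (r : ℝ) : what (fun _ => (1:ℝ)) r = 1 - r := by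
  rw [what]; simp

lemma radial_one : RadialWeight (fun _ : ℂ => (1:ℝ)) := by
  refine ⟨fun _ => zero_le_one, fun _ => rfl, ?_⟩
  refine integrableOn_const (ne_of_lt ?_) (by simp)
  have h1 : dA UD = (ENNReal.ofReal Real.pi)⁻¹ * volume UD := by
    rw [dA, Measure.smul_apply, smul_eq_mul]
  rw [h1]
  refine ENNReal.mul_lt_top ?_ ?_
  · exact ENNReal.inv_lt_top.2 (ENNReal.ofReal_pos.2 Real.pi_pos)
  · exact measure_ball_lt_top

lemma whatpos_one : WhatPos (fun _ : ℂ => (1:ℝ)) := by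
  intro r h0 h1; rw [what_one]; linarith

lemma dclass_one : Dclass (fun _ : ℂ => (1:ℝ)) := by
  constructor
  · refine ⟨2, one_lt_two, fun r h0 h1 => ?_⟩
    rw [what_one, what_one]; linarith
  · refine ⟨2, one_lt_two, 3/2, by norm_num, fun r h0 h1 => ?_⟩
    rw [what_one, what_one]; linarith


end DIL

/-- Lemma 2.3, (i)⇔(iii): `ω ∈ D̂` iff for some (equivalently each) `ν ∈ D`
one has `∫_0^r ω/(ω̂ ν̂) dt ≤ C/ν̂(r)`. -/
theorem Dhat_iff_integral_lower (ω : ℂ → ℝ) (hω : RadialWeight ω) (hωp : WhatPos ω) :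
    (Dhat ω ↔ ∃ ν : ℂ → ℝ, RadialWeight ν ∧ WhatPos ν ∧ Dclass ν ∧
        ∃ C > (0 : ℝ), ∀ r : ℝ, 0 ≤ r → r < 1 →
          (∫ t in (0 : ℝ)..r, ω (t : ℂ) / (what ω t * what ν t)) ≤ C / what ν r) ∧
    (Dhat ω ↔ ∀ ν : ℂ → ℝ, RadialWeight ν → WhatPos ν → Dclass ν →
        ∃ C > (0 : ℝ), ∀ r : ℝ, 0 ≤ r → r < 1 →
          (∫ t in (0 : ℝ)..r, ω (t : ℂ) / (what ω t * what ν t)) ≤ C / what ν r) := by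
  refine ⟨⟨?_, ?_⟩, ⟨?_, ?_⟩⟩
  · intro hD
    exact ⟨fun _ => 1, DIL.radial_one, DIL.whatpos_one, DIL.dclass_one,
      DIL.P1 hω.1 hωp hD (fun _ => zero_le_one) DIL.whatpos_one DIL.dclass_one⟩
  · rintro ⟨ν, hν, hνp, hνD, C, hC, hb⟩
    exact DIL.P2 hω.1 hωp hν.1 hνp hνD.1 hC hb
  · intro hD ν hν hνp hνD
    exact DIL.P1 hω.1 hωp hD hν.1 hνp hνD
  · intro h
    obtain ⟨C, hC, hb⟩ := h (fun _ => 1) DIL.radial_one DIL.whatpos_one DIL.dclass_one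
    exact DIL.P2 hω.1 hωp (fun _ => zero_le_one) DIL.whatpos_one DIL.dclass_one.1 hC hb
end

section
/- Let ω, ν ∈ D be radial weights with ω̂, ν̂ > 0 on [0,1), and define σ(t) = ω(t)ν̂(t)/ω̂(t) for 0 ≤ t < 1. Then there exists C ≥ 1 such that C^{-1} ν̂(r) ≤ σ̂(r) ≤ C ν̂(r) for all 0 ≤ r < 1, where σ̂(r) = ∫_r^1 σ(t) dt; consequently σ ∈ D. -/
open MeasureTheory Set
open scoped ENNReal ComplexConjugate

section Aux

open intervalIntegral

variable {ω ν : ℂ → ℝ}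

theorem aux_intOn (hp : 0 < what ω 0) :
    IntegrableOn (fun s : ℝ => ω (s : ℂ)) (Ioc (0:ℝ) 1) := by
  by_contra hc
  have h1 : ¬ IntervalIntegrable (fun s : ℝ => ω (s : ℂ)) volume 0 1 := by
    rw [intervalIntegrable_iff_integrableOn_Ioc_of_le (by norm_num : (0:ℝ) ≤ 1)]
    exact hc
  have : what ω 0 = 0 := intervalIntegral.integral_undef h1
  rw [this] at hp; exact lt_irrefl 0 hp

theorem aux_ii (hp : 0 < what ω 0) {a b : ℝ} (ha : 0 ≤ a) (hab : a ≤ b) (hb : b ≤ 1) :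
    IntervalIntegrable (fun s : ℝ => ω (s : ℂ)) volume a b := by
  rw [intervalIntegrable_iff_integrableOn_Ioc_of_le hab]
  exact (aux_intOn hp).mono_set (fun x hx => ⟨lt_of_le_of_lt ha hx.1, le_trans hx.2 hb⟩)

theorem aux_split (hp : 0 < what ω 0) {a b : ℝ} (ha : 0 ≤ a) (hab : a ≤ b) (hb : b ≤ 1) :
    what ω a = (∫ s in a..b, ω (s : ℂ)) + what ω b := by
  rw [what, what, ← intervalIntegral.integral_add_adjacent_intervals
    (aux_ii hp ha hab hb) (aux_ii hp (le_trans ha hab) hb le_rfl)]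

theorem aux_iv_nonneg (h0 : ∀ z, 0 ≤ ω z) {a b : ℝ} (hab : a ≤ b) :
    0 ≤ ∫ s in a..b, ω (s : ℂ) :=
  intervalIntegral.integral_nonneg hab (fun s _ => h0 _)

theorem aux_what_nonneg (h0 : ∀ z, 0 ≤ ω z) {a : ℝ} (ha : a ≤ 1) : 0 ≤ what ω a :=
  aux_iv_nonneg h0 ha

theorem aux_anti (h0 : ∀ z, 0 ≤ ω z) (hp : 0 < what ω 0) {a b : ℝ}
    (ha : 0 ≤ a) (hab : a ≤ b) (hb : b ≤ 1) : what ω b ≤ what ω a := by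
  rw [aux_split hp ha hab hb]
  linarith [aux_iv_nonneg h0 hab]

theorem aux_dhat_iter (h0 : ∀ z, 0 ≤ ω z) (hp : 0 < what ω 0) {C : ℝ} (hC1 : 1 < C)
    (hC : ∀ r : ℝ, 0 ≤ r → r < 1 → what ω r ≤ C * what ω ((1 + r) / 2)) :
    ∀ n : ℕ, ∀ r : ℝ, 0 ≤ r → r < 1 → what ω r ≤ C ^ n * what ω (1 - (1 - r) / 2 ^ n) := by
  intro n
  induction n with
  | zero => intro r h0r hr1; simp
  | succ n ih =>
    intro r h0r hr1
    set s := 1 - (1 - r) / 2 ^ n with hs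
    have h2n : (0:ℝ) < 2 ^ n := by positivity
    have hrs : r ≤ s := by
      rw [hs]
      have : (1 - r) / 2 ^ n ≤ 1 - r := by
        apply div_le_self (by linarith) (one_le_pow₀ (by norm_num))
      linarith
    have hs1 : s < 1 := by
      rw [hs]
      have : 0 < (1 - r) / 2 ^ n := div_pos (by linarith) (by positivity)
      linarith
    have h1 := ih r h0r hr1
    have h2 := hC s (le_trans h0r hrs) hs1
    have key : (1 + s) / 2 = 1 - (1 - r) / 2 ^ (n + 1) := by
      rw [hs]; field_simp; ring
    calc what ω r ≤ C ^ n * what ω s := h1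
      _ ≤ C ^ n * (C * what ω ((1 + s) / 2)) :=
          mul_le_mul_of_nonneg_left h2 (pow_nonneg (by linarith) n)
      _ = C ^ (n+1) * what ω (1 - (1 - r) / 2 ^ (n+1)) := by rw [key]; ring

theorem aux_dhat_pair (h0 : ∀ z, 0 ≤ ω z) (hp : WhatPos ω) {C : ℝ} (hC1 : 1 < C)
    (hC : ∀ r : ℝ, 0 ≤ r → r < 1 → what ω r ≤ C * what ω ((1 + r) / 2))
    {n : ℕ} {a b : ℝ} (ha : 0 ≤ a) (hab : a ≤ b) (hb : b < 1)
    (hgap : 1 - a ≤ 2 ^ n * (1 - b)) : what ω a ≤ C ^ n * what ω b := by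
  have hp0 : 0 < what ω 0 := hp 0 le_rfl one_pos
  have ha1 : a < 1 := lt_of_le_of_lt hab hb
  have h2n : (0:ℝ) < 2 ^ n := by positivity
  have hble : b ≤ 1 - (1 - a) / 2 ^ n := by
    rw [le_sub_comm]
    exact div_le_of_le_mul₀ (le_of_lt h2n) (by linarith) (by linarith [hgap])
  calc what ω a ≤ C ^ n * what ω (1 - (1 - a) / 2 ^ n) :=
        aux_dhat_iter h0 hp0 hC1 hC n a ha ha1
    _ ≤ C ^ n * what ω b := by
        apply mul_le_mul_of_nonneg_left _ (pow_nonneg (by linarith) n)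
        apply aux_anti h0 hp0 (le_trans ha hab) hble
        have : 0 ≤ (1 - a) / 2 ^ n := div_nonneg (by linarith) (by positivity)
        linarith

theorem aux_dch_iter (h0 : ∀ z, 0 ≤ ω z) (hp : 0 < what ω 0) {K C : ℝ} (hK : 1 < K) (hC : 1 < C)
    (h : ∀ r : ℝ, 0 ≤ r → r < 1 → C * what ω (1 - (1 - r) / K) ≤ what ω r) :
    ∀ n : ℕ, ∀ r : ℝ, 0 ≤ r → r < 1 → C ^ n * what ω (1 - (1 - r) / K ^ n) ≤ what ω r := by
  intro n
  induction n with
  | zero => intro r h0r hr1; simp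
  | succ n ih =>
    intro r h0r hr1
    set s := 1 - (1 - r) / K ^ n with hs
    have hKn : (0:ℝ) < K ^ n := by positivity
    have hrs : r ≤ s := by
      rw [hs]
      have : (1 - r) / K ^ n ≤ 1 - r :=
        div_le_self (by linarith) (one_le_pow₀ (le_of_lt hK))
      linarith
    have hs1 : s < 1 := by
      rw [hs]
      have : 0 < (1 - r) / K ^ n := div_pos (by linarith) (by positivity)
      linarith
    have key : 1 - (1 - s) / K = 1 - (1 - r) / K ^ (n + 1) := by
      rw [hs]; field_simp; ring
    have h2 := h s (le_trans h0r hrs) hs1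
    calc C ^ (n+1) * what ω (1 - (1 - r) / K ^ (n+1))
        = C ^ n * (C * what ω (1 - (1 - s) / K)) := by rw [key]; ring
      _ ≤ C ^ n * what ω s := mul_le_mul_of_nonneg_left h2 (pow_nonneg (by linarith) n)
      _ ≤ what ω r := ih r h0r hr1

end Aux
section Aux2

variable {ω ν : ℂ → ℝ}

theorem aux_geom {q : ℝ} (h0 : 0 ≤ q) (h1 : q < 1) (N : ℕ) :
    ∑ i ∈ Finset.range N, q ^ i ≤ (1 - q)⁻¹ := by
  have h2 : 0 < 1 - q := by linarith
  rw [inv_eq_one_div, le_div_iff₀ h2, mul_comm]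
  have key := geom_sum_mul q N
  have hN := pow_nonneg h0 N
  nlinarith [key]

theorem aux_meas (h0ω : ∀ z, 0 ≤ ω z) (h0ν : ∀ z, 0 ≤ ν z)
    (hpω : 0 < what ω 0) (hpν : 0 < what ν 0) :
    AEStronglyMeasurable (fun t : ℝ => ω (t : ℂ) * what ν ‖(t : ℂ)‖ / what ω ‖(t : ℂ)‖)
      (volume.restrict (Ioc (0:ℝ) 1)) := by
  have hclamp : ∀ ρ : ℂ → ℝ, (∀ z, 0 ≤ ρ z) → 0 < what ρ 0 →
      Antitone (fun t : ℝ => what ρ (min (max t 0) 1)) := by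
    intro ρ h0ρ hpρ x y hxy
    exact aux_anti h0ρ hpρ (le_min (le_max_right x 0) zero_le_one)
      (min_le_min (max_le_max hxy le_rfl) le_rfl) (min_le_right _ _)
  have hq : Measurable (fun t : ℝ =>
      what ν (min (max t 0) 1) / what ω (min (max t 0) 1)) :=
    ((hclamp ν h0ν hpν).measurable).div ((hclamp ω h0ω hpω).measurable)
  have hmω : AEStronglyMeasurable (fun t : ℝ => ω (t : ℂ))
      (volume.restrict (Ioc (0:ℝ) 1)) := (aux_intOn hpω).aestronglyMeasurable
  refine (hmω.mul hq.aestronglyMeasurable).congr ?_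
  filter_upwards [ae_restrict_mem measurableSet_Ioc] with t ht
  simp only [Pi.mul_apply]
  have ht0 : (0:ℝ) < t := ht.1
  have hnorm : ‖(t : ℂ)‖ = t := by
    rw [Complex.norm_real, Real.norm_of_nonneg ht0.le]
  have hcl : min (max t 0) 1 = t := by
    rw [max_eq_left ht0.le, min_eq_left ht.2]
  rw [hcl, hnorm, mul_div_assoc]

theorem aux_piece (h0ω : ∀ z, 0 ≤ ω z) (h0ν : ∀ z, 0 ≤ ν z)
    (hpω : WhatPos ω) (hpν : WhatPos ν) {a b : ℝ} (ha : 0 ≤ a) (hab : a ≤ b) (hb : b < 1) :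
    IntegrableOn (fun t : ℝ => ω (t : ℂ) * what ν ‖(t : ℂ)‖ / what ω ‖(t : ℂ)‖) (Ioc a b) ∧
    ∫ t in Ioc a b, ω (t : ℂ) * what ν ‖(t : ℂ)‖ / what ω ‖(t : ℂ)‖ ≤
      what ν a / what ω b * (what ω a - what ω b) := by
  set h : ℝ → ℝ := fun t => ω (t : ℂ) * what ν ‖(t : ℂ)‖ / what ω ‖(t : ℂ)‖ with hh
  have hpω0 : 0 < what ω 0 := hpω 0 le_rfl one_pos
  have hpν0 : 0 < what ν 0 := hpν 0 le_rfl one_pos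
  have hsub : Ioc a b ⊆ Ioc (0:ℝ) 1 := fun x hx =>
    ⟨lt_of_le_of_lt ha hx.1, le_trans hx.2 hb.le⟩
  have hWb : 0 < what ω b := hpω b (le_trans ha hab) hb
  have hNa : 0 ≤ what ν a := aux_what_nonneg h0ν (le_trans hab hb.le)
  set g : ℝ → ℝ := fun t => what ν a / what ω b * ω (t : ℂ) with hg
  have hgint : IntegrableOn g (Ioc a b) :=
    ((aux_intOn hpω0).mono_set hsub).const_mul _
  have hbound : ∀ t ∈ Ioc a b, 0 ≤ h t ∧ h t ≤ g t := by
    intro t ht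
    have ht0 : (0:ℝ) < t := lt_of_le_of_lt ha ht.1
    have ht1 : t < 1 := lt_of_le_of_lt ht.2 hb
    have hnorm : ‖(t : ℂ)‖ = t := by rw [Complex.norm_real, Real.norm_of_nonneg ht0.le]
    have hWt : 0 < what ω t := hpω t ht0.le ht1
    have hWbt : what ω b ≤ what ω t := aux_anti h0ω hpω0 ht0.le ht.2 hb.le
    have hNta : what ν t ≤ what ν a := aux_anti h0ν hpν0 ha ht.1.le ht1.le
    have hNt : 0 ≤ what ν t := aux_what_nonneg h0ν ht1.le
    constructor
    · rw [hh]
      simp only [hnorm]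
      exact div_nonneg (mul_nonneg (h0ω _) hNt) hWt.le
    · rw [hh, hg]
      simp only [hnorm]
      calc ω (t : ℂ) * what ν t / what ω t ≤ ω (t : ℂ) * what ν a / what ω b := by
            apply div_le_div₀ (mul_nonneg (h0ω _) hNa)
              (mul_le_mul_of_nonneg_left hNta (h0ω _)) hWb hWbt
        _ = what ν a / what ω b * ω (t : ℂ) := by ring
  have hmeas : AEStronglyMeasurable h (volume.restrict (Ioc a b)) :=
    (aux_meas h0ω h0ν hpω0 hpν0).mono_measure (Measure.restrict_mono hsub le_rfl)
  have hint : IntegrableOn h (Ioc a b) := by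
    apply Integrable.mono' hgint hmeas
    filter_upwards [ae_restrict_mem measurableSet_Ioc] with t ht
    rw [Real.norm_of_nonneg (hbound t ht).1]
    exact (hbound t ht).2
  refine ⟨hint, ?_⟩
  calc ∫ t in Ioc a b, h t ≤ ∫ t in Ioc a b, g t :=
        setIntegral_mono_on hint hgint measurableSet_Ioc (fun t ht => (hbound t ht).2)
    _ = what ν a / what ω b * ∫ t in Ioc a b, ω (t : ℂ) := by
        rw [hg]; exact integral_const_mul _ _
    _ = what ν a / what ω b * (what ω a - what ω b) := by
        congr 1
        rw [← intervalIntegral.integral_of_le hab]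
        have := aux_split hpω0 ha hab hb.le
        linarith

end Aux2
section Aux3

variable {ω ν : ℂ → ℝ}

theorem aux_comp (h0ω : ∀ z, 0 ≤ ω z) (hpω : WhatPos ω) (hωD : Dclass ω)
    (h0ν : ∀ z, 0 ≤ ν z) (hpν : WhatPos ν) (hνD : Dclass ν) :
    ∃ C ≥ (1 : ℝ), ∀ r : ℝ, 0 ≤ r → r < 1 →
        C⁻¹ * what ν r ≤ what (fun z => ω z * what ν ‖z‖ / what ω ‖z‖) r ∧
        what (fun z => ω z * what ν ‖z‖ / what ω ‖z‖) r ≤ C * what ν r := by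
  obtain ⟨Cω, hCω1, hCω⟩ := hωD.1
  obtain ⟨Kω, hKω1, Cω', hCω'1, hCω'⟩ := hωD.2
  obtain ⟨Cν, hCν1, hCν⟩ := hνD.1
  obtain ⟨Kν, hKν1, Cν₂, hCν₂1, hCν₂⟩ := hνD.2
  have hpω0 : 0 < what ω 0 := hpω 0 le_rfl one_pos
  have hpν0 : 0 < what ν 0 := hpν 0 le_rfl one_pos
  obtain ⟨m, hm⟩ := pow_unbounded_of_one_lt Kν (by norm_num : (1:ℝ) < 2)
  obtain ⟨mK, hmK⟩ := pow_unbounded_of_one_lt Kω (by norm_num : (1:ℝ) < 2)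
  set q : ℝ := Cν₂⁻¹ with hqdef
  have hq0 : 0 ≤ q := inv_nonneg.2 (by linarith)
  have hq1 : q < 1 := by rw [hqdef, inv_lt_one_iff₀]; right; exact hCν₂1
  set A : ℝ := Cω ^ m with hA
  have hA1 : 1 ≤ A := one_le_pow₀ hCω1.le
  set Cup : ℝ := (A - 1) * (1 - q)⁻¹ with hCup
  have hCup0 : 0 ≤ Cup := mul_nonneg (by linarith) (inv_nonneg.2 (by linarith))
  set clo : ℝ := (1 - 1 / Cω') * (Cν ^ mK)⁻¹ with hclo
  have hCω'0 : (0:ℝ) < Cω' := by linarith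
  have h11 : 0 < 1 - 1 / Cω' := by
    have : 1 / Cω' < 1 := by rw [div_lt_one hCω'0]; exact hCω'1
    linarith
  have hCνmK : (0:ℝ) < Cν ^ mK := pow_pos (by linarith) mK
  have hclo0 : 0 < clo := mul_pos h11 (inv_pos.2 hCνmK)
  refine ⟨max (max Cup clo⁻¹) 1, le_max_right _ _, fun r hr0 hr1 => ?_⟩
  set σe : ℝ → ℝ := fun t => ω (t : ℂ) * what ν ‖(t : ℂ)‖ / what ω ‖(t : ℂ)‖ with hσe
  have hwhatσ : what (fun z => ω z * what ν ‖z‖ / what ω ‖z‖) r = ∫ t in Ioc r 1, σe t := by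
    rw [what, intervalIntegral.integral_of_le hr1.le]
  set R : ℕ → ℝ := fun n => 1 - (1 - r) / Kν ^ n with hR
  have hKν0 : (0:ℝ) < Kν := by linarith
  have hR0 : R 0 = r := by rw [hR]; simp
  have hRlt : ∀ n, R n < 1 := by
    intro n
    have h1 : 0 < (1 - r) / Kν ^ n := div_pos (by linarith) (pow_pos hKν0 n)
    simp only [hR]; linarith
  have hrR : ∀ n, r ≤ R n := by
    intro n
    have h1 : (1 - r) / Kν ^ n ≤ 1 - r := div_le_self (by linarith) (one_le_pow₀ hKν1.le)
    simp only [hR]; linarith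
  have hR0n : ∀ n, 0 ≤ R n := fun n => le_trans hr0 (hrR n)
  have hRstep : ∀ n, R n ≤ R (n + 1) := by
    intro n
    have h1 : (1 - r) / Kν ^ (n+1) ≤ (1 - r) / Kν ^ n := by
      gcongr
      · linarith
      · exact Nat.le_succ n
    simp only [hR]; linarith
  have hRmono : Monotone R := monotone_nat_of_le_succ hRstep
  have hgap : ∀ n, 1 - R n ≤ 2 ^ m * (1 - R (n + 1)) := by
    intro n
    have e1 : 1 - R n = (1 - r) / Kν ^ n := by simp only [hR]; ring
    have e2 : 1 - R (n + 1) = (1 - r) / Kν ^ (n + 1) := by simp only [hR]; ring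
    rw [e1, e2]
    have key : (1 - r) / Kν ^ n = Kν * ((1 - r) / Kν ^ (n + 1)) := by
      field_simp
      ring
    rw [key]
    exact mul_le_mul_of_nonneg_right hm.le
      (div_nonneg (by linarith) (pow_pos hKν0 _).le)
  have hWνR : ∀ n, what ν (R n) ≤ q ^ n * what ν r := by
    intro n
    have h1 : Cν₂ ^ n * what ν (R n) ≤ what ν r :=
      aux_dch_iter h0ν hpν0 hKν1 hCν₂1 hCν₂ n r hr0 hr1
    have h2 : (0:ℝ) < Cν₂ ^ n := pow_pos (by linarith) n
    calc what ν (R n) = (Cν₂ ^ n)⁻¹ * (Cν₂ ^ n * what ν (R n)) := by field_simp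
      _ ≤ (Cν₂ ^ n)⁻¹ * what ν r := mul_le_mul_of_nonneg_left h1 (inv_nonneg.2 h2.le)
      _ = q ^ n * what ν r := by rw [hqdef, inv_pow]
  have hpiece : ∀ n, IntegrableOn σe (Ioc (R n) (R (n + 1))) ∧
      ∫ t in Ioc (R n) (R (n + 1)), σe t ≤ (A - 1) * (q ^ n * what ν r) := by
    intro n
    obtain ⟨hint, hle⟩ := aux_piece h0ω h0ν hpω hpν (hR0n n) (hRstep n) (hRlt (n + 1))
    refine ⟨hint, le_trans hle ?_⟩
    have hWb : 0 < what ω (R (n + 1)) := hpω _ (hR0n _) (hRlt _)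
    have hdiff : what ω (R n) - what ω (R (n + 1)) ≤ (A - 1) * what ω (R (n + 1)) := by
      have h3 : what ω (R n) ≤ Cω ^ m * what ω (R (n + 1)) :=
        aux_dhat_pair h0ω hpω hCω1 hCω (hR0n n) (hRstep n) (hRlt (n + 1)) (hgap n)
      rw [← hA] at h3
      linarith
    have hNn : 0 ≤ what ν (R n) := aux_what_nonneg h0ν (hRlt n).le
    calc what ν (R n) / what ω (R (n + 1)) * (what ω (R n) - what ω (R (n + 1)))
        ≤ what ν (R n) / what ω (R (n + 1)) * ((A - 1) * what ω (R (n + 1))) :=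
          mul_le_mul_of_nonneg_left hdiff (div_nonneg hNn hWb.le)
      _ = (A - 1) * what ν (R n) := by field_simp
      _ ≤ (A - 1) * (q ^ n * what ν r) :=
          mul_le_mul_of_nonneg_left (hWνR n) (by linarith)
  have hpart : ∀ N, IntegrableOn σe (Ioc r (R N)) ∧
      ∫ t in Ioc r (R N), σe t ≤ (A - 1) * what ν r * ∑ i ∈ Finset.range N, q ^ i := by
    intro N
    induction N with
    | zero =>
      constructor
      · rw [hR0, Set.Ioc_self]; exact integrableOn_empty
      · rw [hR0, Set.Ioc_self]; simp
    | succ N ih =>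
      have hunion : Ioc r (R (N + 1)) = Ioc r (R N) ∪ Ioc (R N) (R (N + 1)) :=
        (Set.Ioc_union_Ioc_eq_Ioc (hrR N) (hRstep N)).symm
      have hint : IntegrableOn σe (Ioc r (R (N + 1))) := by
        rw [hunion]; exact ih.1.union (hpiece N).1
      refine ⟨hint, ?_⟩
      rw [hunion, setIntegral_union (Set.Ioc_disjoint_Ioc_of_le le_rfl) measurableSet_Ioc ih.1 (hpiece N).1,
        Finset.sum_range_succ]
      calc (∫ t in Ioc r (R N), σe t) + ∫ t in Ioc (R N) (R (N + 1)), σe t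
          ≤ (A - 1) * what ν r * ∑ i ∈ Finset.range N, q ^ i + (A - 1) * (q ^ N * what ν r) :=
            add_le_add ih.2 (hpiece N).2
        _ = (A - 1) * what ν r * (∑ i ∈ Finset.range N, q ^ i + q ^ N) := by ring
  have hWνr0 : 0 < what ν r := hpν r hr0 hr1
  have hpartC : ∀ N, ∫ t in Ioc r (R N), σe t ≤ Cup * what ν r := by
    intro N
    calc ∫ t in Ioc r (R N), σe t ≤ (A - 1) * what ν r * ∑ i ∈ Finset.range N, q ^ i :=
          (hpart N).2
      _ ≤ (A - 1) * what ν r * (1 - q)⁻¹ :=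
          mul_le_mul_of_nonneg_left (aux_geom hq0 hq1 N)
            (mul_nonneg (by linarith) hWνr0.le)
      _ = Cup * what ν r := by rw [hCup]; ring
  have hRtend : Filter.Tendsto R Filter.atTop (nhds 1) := by
    have h1 : Filter.Tendsto (fun n : ℕ => (1 - r) * Kν⁻¹ ^ n) Filter.atTop (nhds 0) := by
      have h2 := tendsto_pow_atTop_nhds_zero_of_lt_one (inv_nonneg.2 hKν0.le)
        (by rw [inv_lt_one_iff₀]; right; exact hKν1)
      simpa using h2.const_mul (1 - r)
    have h3 : Filter.Tendsto (fun n : ℕ => 1 - (1 - r) * Kν⁻¹ ^ n) Filter.atTop (nhds (1 - 0)) :=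
      tendsto_const_nhds.sub h1
    have hReq : R = fun n : ℕ => 1 - (1 - r) * Kν⁻¹ ^ n := by
      funext n
      simp only [hR]
      rw [inv_pow, div_eq_mul_inv]
    rw [hReq]
    simpa using h3
  have hσnn : ∀ t : ℝ, 0 < t → t ≤ 1 → 0 ≤ σe t := by
    intro t ht0 ht1
    simp only [hσe, Complex.norm_real, Real.norm_of_nonneg ht0.le]
    exact div_nonneg (mul_nonneg (h0ω _) (aux_what_nonneg h0ν ht1)) (aux_what_nonneg h0ω ht1)
  have hintfull : IntegrableOn σe (Ioc r 1) := by
    apply integrableOn_Ioc_of_intervalIntegral_norm_bounded_right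
      (I := Cup * what ν r) (fun N => (hpart N).1) hRtend
    apply Filter.Eventually.of_forall
    intro N
    have heq : ∫ t in Ioc r (R N), ‖σe t‖ = ∫ t in Ioc r (R N), σe t := by
      apply setIntegral_congr_fun measurableSet_Ioc
      intro t ht
      exact Real.norm_of_nonneg (hσnn t (lt_of_le_of_lt hr0 ht.1) (le_trans ht.2 (hRlt N).le))
    rw [heq]
    exact hpartC N
  have hUnion : ⋃ N, Ioc r (R N) = Ioo r 1 := by
    ext x
    simp only [Set.mem_iUnion, Set.mem_Ioc, Set.mem_Ioo]
    constructor
    · rintro ⟨N, h1, h2⟩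
      exact ⟨h1, lt_of_le_of_lt h2 (hRlt N)⟩
    · rintro ⟨h1, h2⟩
      obtain ⟨N, hN⟩ := pow_unbounded_of_one_lt ((1 - r) / (1 - x)) hKν1
      refine ⟨N, h1, ?_⟩
      have hx1 : 0 < 1 - x := by linarith
      have hKN : 0 < Kν ^ N := pow_pos hKν0 N
      have h4 : (1 - r) / Kν ^ N ≤ 1 - x := by
        rw [div_le_iff₀ hKN]
        have h5 := (div_lt_iff₀ hx1).1 hN
        nlinarith
      simp only [hR]; linarith
  have hup : ∫ t in Ioc r 1, σe t ≤ Cup * what ν r := by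
    rw [integral_Ioc_eq_integral_Ioo]
    have hmono : Monotone (fun N => Ioc r (R N)) := fun i j hij =>
      Set.Ioc_subset_Ioc_right (hRmono hij)
    have htend := tendsto_setIntegral_of_monotone (fun N => measurableSet_Ioc) hmono
      (by rw [hUnion]; exact hintfull.mono_set Set.Ioo_subset_Ioc_self)
    rw [hUnion] at htend
    exact le_of_tendsto htend (Filter.Eventually.of_forall hpartC)
  -- lower bound
  set ρ : ℝ := 1 - (1 - r) / Kω with hρ
  have hKω0 : (0:ℝ) < Kω := by linarith
  have hrρ : r ≤ ρ := by
    have h1 : (1 - r) / Kω ≤ 1 - r := div_le_self (by linarith) hKω1.le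
    simp only [hρ]; linarith
  have hρ1 : ρ < 1 := by
    have h1 : 0 < (1 - r) / Kω := div_pos (by linarith) hKω0
    simp only [hρ]; linarith
  have hρ0 : 0 ≤ ρ := le_trans hr0 hrρ
  have hWωr : 0 < what ω r := hpω r hr0 hr1
  have hWνρ : 0 < what ν ρ := hpν ρ hρ0 hρ1
  set g2 : ℝ → ℝ := fun t => what ν ρ / what ω r * ω (t : ℂ) with hg2
  have hsub2 : Ioc r ρ ⊆ Ioc (0:ℝ) 1 := fun x hx =>
    ⟨lt_of_le_of_lt hr0 hx.1, le_trans hx.2 hρ1.le⟩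
  have hg2int : IntegrableOn g2 (Ioc r ρ) := ((aux_intOn hpω0).mono_set hsub2).const_mul _
  have hlow1 : ∫ t in Ioc r ρ, g2 t ≤ ∫ t in Ioc r ρ, σe t := by
    apply setIntegral_mono_on hg2int
      (hintfull.mono_set (Set.Ioc_subset_Ioc_right hρ1.le)) measurableSet_Ioc
    intro t ht
    have ht0 : 0 < t := lt_of_le_of_lt hr0 ht.1
    have ht1 : t < 1 := lt_of_le_of_lt ht.2 hρ1
    have hnorm : ‖(t : ℂ)‖ = t := by rw [Complex.norm_real, Real.norm_of_nonneg ht0.le]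
    simp only [hσe, hg2, hnorm]
    have hWt : 0 < what ω t := hpω t ht0.le ht1
    have hWtr : what ω t ≤ what ω r := aux_anti h0ω hpω0 hr0 ht.1.le ht1.le
    have hNρt : what ν ρ ≤ what ν t := aux_anti h0ν hpν0 ht0.le ht.2 hρ1.le
    calc what ν ρ / what ω r * ω (t : ℂ) = ω (t : ℂ) * what ν ρ / what ω r := by ring
      _ ≤ ω (t : ℂ) * what ν t / what ω t :=
          div_le_div₀ (mul_nonneg (h0ω _) (aux_what_nonneg h0ν ht1.le))
            (mul_le_mul_of_nonneg_left hNρt (h0ω _)) hWt hWtr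
  have hg2val : ∫ t in Ioc r ρ, g2 t = what ν ρ / what ω r * (what ω r - what ω ρ) := by
    simp only [hg2]
    rw [integral_const_mul]
    congr 1
    rw [← intervalIntegral.integral_of_le hrρ]
    have := aux_split hpω0 hr0 hrρ hρ1.le
    linarith
  have hωρ : Cω' * what ω ρ ≤ what ω r := hCω' r hr0 hr1
  have hdifflow : what ω r * (1 - 1 / Cω') ≤ what ω r - what ω ρ := by
    have h1 : what ω ρ ≤ what ω r / Cω' := by rw [le_div_iff₀ hCω'0]; linarith
    have h2 : what ω r * (1 - 1 / Cω') = what ω r - what ω r / Cω' := by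
      field_simp
    linarith
  have hlow2 : what ν ρ * (1 - 1 / Cω') ≤ ∫ t in Ioc r ρ, σe t := by
    refine le_trans ?_ hlow1
    rw [hg2val]
    calc what ν ρ * (1 - 1 / Cω')
        = what ν ρ / what ω r * (what ω r * (1 - 1 / Cω')) := by
          field_simp
      _ ≤ what ν ρ / what ω r * (what ω r - what ω ρ) :=
          mul_le_mul_of_nonneg_left hdifflow (div_nonneg hWνρ.le hWωr.le)
  have hνrρ : what ν r ≤ Cν ^ mK * what ν ρ := by
    apply aux_dhat_pair h0ν hpν hCν1 hCν hr0 hrρ hρ1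
    have e1 : 1 - ρ = (1 - r) / Kω := by simp only [hρ]; ring
    rw [e1]
    have key : (2:ℝ) ^ mK * ((1 - r) / Kω) = 2 ^ mK / Kω * (1 - r) := by ring
    rw [key]
    have h1K : 1 ≤ (2:ℝ) ^ mK / Kω := (one_le_div hKω0).2 hmK.le
    have h2 : (1:ℝ) * (1 - r) ≤ 2 ^ mK / Kω * (1 - r) :=
      mul_le_mul_of_nonneg_right h1K (by linarith)
    linarith
  have hlowfull : clo * what ν r ≤ ∫ t in Ioc r 1, σe t := by
    have hmono2 : ∫ t in Ioc r ρ, σe t ≤ ∫ t in Ioc r 1, σe t := by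
      apply setIntegral_mono_set hintfull ?_ ((Set.Ioc_subset_Ioc_right hρ1.le).eventuallyLE)
      filter_upwards [ae_restrict_mem measurableSet_Ioc] with t ht
      exact hσnn t (lt_of_le_of_lt hr0 ht.1) ht.2
    refine le_trans ?_ (le_trans hlow2 hmono2)
    rw [hclo]
    have h6 : (Cν ^ mK)⁻¹ * what ν r ≤ what ν ρ := by
      calc (Cν ^ mK)⁻¹ * what ν r ≤ (Cν ^ mK)⁻¹ * (Cν ^ mK * what ν ρ) :=
            mul_le_mul_of_nonneg_left hνrρ (inv_nonneg.2 hCνmK.le)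
        _ = what ν ρ := by field_simp
    calc (1 - 1 / Cω') * (Cν ^ mK)⁻¹ * what ν r
        = (1 - 1 / Cω') * ((Cν ^ mK)⁻¹ * what ν r) := by ring
      _ ≤ (1 - 1 / Cω') * what ν ρ := mul_le_mul_of_nonneg_left h6 h11.le
      _ = what ν ρ * (1 - 1 / Cω') := by ring
  constructor
  · rw [hwhatσ]
    refine le_trans ?_ hlowfull
    apply mul_le_mul_of_nonneg_right ?_ hWνr0.le
    have h1 : clo⁻¹ ≤ max (max Cup clo⁻¹) 1 := le_trans (le_max_right _ _) (le_max_left _ _)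
    have h2 : 0 < clo⁻¹ := inv_pos.2 hclo0
    calc (max (max Cup clo⁻¹) 1)⁻¹ ≤ (clo⁻¹)⁻¹ := by
          apply inv_anti₀ h2 h1
      _ = clo := inv_inv clo
  · rw [hwhatσ]
    refine le_trans hup ?_
    exact mul_le_mul_of_nonneg_right (le_trans (le_max_left _ _) (le_max_left _ _)) hWνr0.le

end Aux3
/-- Lemma 2.4: if `ω, ν ∈ D` and `σ = ω ν̂ / ω̂`, then `σ̂ ≍ ν̂` on `[0,1)`
and hence `σ ∈ D`. -/
theorem sigma_hat_comparable (ω ν : ℂ → ℝ)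
    (hω : RadialWeight ω) (hωp : WhatPos ω) (hωD : Dclass ω)
    (hν : RadialWeight ν) (hνp : WhatPos ν) (hνD : Dclass ν) :
    (∃ C ≥ (1 : ℝ), ∀ r : ℝ, 0 ≤ r → r < 1 →
        C⁻¹ * what ν r ≤ what (fun z => ω z * what ν ‖z‖ / what ω ‖z‖) r ∧
        what (fun z => ω z * what ν ‖z‖ / what ω ‖z‖) r ≤ C * what ν r) ∧
      Dclass (fun z => ω z * what ν ‖z‖ / what ω ‖z‖) := by
  have h0ω := hω.1
  have h0ν := hν.1
  obtain ⟨C, hC1, hcomp⟩ := aux_comp h0ω hωp hωD h0ν hνp hνD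
  have hC0 : (0:ℝ) < C := lt_of_lt_of_le one_pos hC1
  have hlow : ∀ r : ℝ, 0 ≤ r → r < 1 →
      what ν r ≤ C * what (fun z => ω z * what ν ‖z‖ / what ω ‖z‖) r := by
    intro r hr0 hr1
    have h3 := (hcomp r hr0 hr1).1
    have h5 := mul_le_mul_of_nonneg_left h3 hC0.le
    rw [← mul_assoc, mul_inv_cancel₀ (ne_of_gt hC0), one_mul] at h5
    exact h5
  refine ⟨⟨C, hC1, hcomp⟩, ?_, ?_⟩
  · -- Dhat σ
    obtain ⟨Cν, hCν1, hCν⟩ := hνD.1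
    have hCC1 : (1:ℝ) ≤ C * C := by nlinarith [hC1]
    refine ⟨C * C * Cν, ?_, ?_⟩
    · calc (1:ℝ) < Cν := hCν1
        _ = 1 * Cν := (one_mul Cν).symm
        _ ≤ C * C * Cν := mul_le_mul_of_nonneg_right hCC1 (by linarith)
    intro r hr0 hr1
    have hmid0 : 0 ≤ (1 + r) / 2 := by linarith
    have hmid1 : (1 + r) / 2 < 1 := by linarith
    have h1 := (hcomp r hr0 hr1).2
    have h2 := hCν r hr0 hr1
    have h4 := hlow _ hmid0 hmid1
    calc what (fun z => ω z * what ν ‖z‖ / what ω ‖z‖) r ≤ C * what ν r := h1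
      _ ≤ C * (Cν * what ν ((1 + r) / 2)) := mul_le_mul_of_nonneg_left h2 hC0.le
      _ ≤ C * (Cν * (C * what (fun z => ω z * what ν ‖z‖ / what ω ‖z‖) ((1 + r) / 2))) := by
          apply mul_le_mul_of_nonneg_left _ hC0.le
          exact mul_le_mul_of_nonneg_left h4 (by linarith)
      _ = C * C * Cν * what (fun z => ω z * what ν ‖z‖ / what ω ‖z‖) ((1 + r) / 2) := by
          ring
  · -- Dcheck σ
    obtain ⟨Kν, hKν1, Cν₂, hCν₂1, hCν₂⟩ := hνD.2
    obtain ⟨n, hn⟩ := pow_unbounded_of_one_lt (C * C) hCν₂1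
    have hn0 : n ≠ 0 := by
      intro h
      rw [h, pow_zero] at hn
      nlinarith
    have hpν0 : 0 < what ν 0 := hνp 0 le_rfl one_pos
    have hKνn1 : (1:ℝ) < Kν ^ n := one_lt_pow₀ hKν1 hn0
    have hCC0 : (0:ℝ) < C * C := by positivity
    refine ⟨Kν ^ n, hKνn1, Cν₂ ^ n / (C * C), (one_lt_div hCC0).2 hn, ?_⟩
    intro r hr0 hr1
    set ρ : ℝ := 1 - (1 - r) / Kν ^ n with hρ
    have hKνn0 : (0:ℝ) < Kν ^ n := by linarith
    have hrρ : r ≤ ρ := by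
      have h1 : (1 - r) / Kν ^ n ≤ 1 - r := div_le_self (by linarith) hKνn1.le
      simp only [hρ]; linarith
    have hρ1 : ρ < 1 := by
      have h1 : 0 < (1 - r) / Kν ^ n := div_pos (by linarith) hKνn0
      simp only [hρ]; linarith
    have hρ0 : 0 ≤ ρ := le_trans hr0 hrρ
    have h5 := (hcomp ρ hρ0 hρ1).2
    have h6 : Cν₂ ^ n * what ν ρ ≤ what ν r :=
      aux_dch_iter h0ν hpν0 hKν1 hCν₂1 hCν₂ n r hr0 hr1
    have h7 := hlow r hr0 hr1
    have hCν₂n0 : (0:ℝ) < Cν₂ ^ n := pow_pos (by linarith) n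
    rw [div_mul_eq_mul_div, div_le_iff₀ hCC0]
    calc Cν₂ ^ n * what (fun z => ω z * what ν ‖z‖ / what ω ‖z‖) ρ
        ≤ Cν₂ ^ n * (C * what ν ρ) := mul_le_mul_of_nonneg_left h5 hCν₂n0.le
      _ = C * (Cν₂ ^ n * what ν ρ) := by ring
      _ ≤ C * what ν r := mul_le_mul_of_nonneg_left h6 hC0.le
      _ ≤ C * (C * what (fun z => ω z * what ν ‖z‖ / what ω ‖z‖) r) :=
          mul_le_mul_of_nonneg_left h7 hC0.le
      _ = what (fun z => ω z * what ν ‖z‖ / what ω ‖z‖) r * (C * C) := by ring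
end

section
/- Let 0 < p, q, r < ∞, let 0 ≤ τ < ∞, and let ω, ν ∈ D̂ be radial weights with ω̂, ν̂ > 0 on [0,1). Then there exists C ≥ 1 (depending only on p, q, r, τ, ω, ν) such that for all z, ζ ∈ 𝔻 with β(z,ζ) ≤ r: C^{-1} ≤ Γ_τ(z,ζ)·γ(z) ≤ C and C^{-1} ≤ Γ_τ(z,ζ)·γ(ζ) ≤ C. -/
open MeasureTheory Set
open scoped ENNReal ComplexConjugate

-- AUX
section Aux
open MeasureTheory

lemma what_mono {ω : ℂ → ℝ} (hω0 : ∀ z, 0 ≤ ω z) {a b : ℝ}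
    (hab : a ≤ b) (hb : b ≤ 1) (hpos : 0 < what ω a) : what ω b ≤ what ω a := by
  have hInt : IntegrableOn (fun s : ℝ => ω (s : ℂ)) (Set.Ioc a 1) volume := by
    by_contra h
    rw [what, intervalIntegral.integral_of_le (le_trans hab hb),
      MeasureTheory.integral_undef h] at hpos
    exact lt_irrefl 0 hpos
  have h1 : IntervalIntegrable (fun s : ℝ => ω (s : ℂ)) volume a b := by
    rw [intervalIntegrable_iff_integrableOn_Ioc_of_le hab]
    exact hInt.mono_set (Set.Ioc_subset_Ioc_right hb)
  have h2 : IntervalIntegrable (fun s : ℝ => ω (s : ℂ)) volume b 1 := by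
    rw [intervalIntegrable_iff_integrableOn_Ioc_of_le hb]
    exact hInt.mono_set (Set.Ioc_subset_Ioc_left hab)
  have hadd := intervalIntegral.integral_add_adjacent_intervals h1 h2
  have hnn : 0 ≤ ∫ s in a..b, ω (s : ℂ) :=
    intervalIntegral.integral_nonneg hab (fun u _ => hω0 _)
  unfold what
  linarith [hadd]

lemma what_iter {ω : ℂ → ℝ} {C : ℝ}
    (hD : ∀ r : ℝ, 0 ≤ r → r < 1 → what ω r ≤ C * what ω ((1 + r) / 2))
    (hC : 0 < C) :
    ∀ n : ℕ, ∀ r : ℝ, 0 ≤ r → r < 1 →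
      what ω r ≤ C ^ n * what ω (1 - (1 - r) / 2 ^ n) := by
  intro n
  induction n with
  | zero => intro r h0 h1; simp
  | succ n ih =>
    intro r h0 h1
    have h2n : (0:ℝ) < 2 ^ n := by positivity
    have hs0 : 0 ≤ 1 - (1 - r) / 2 ^ n := by
      have : (1 - r) / 2 ^ n ≤ 1 - r := by
        apply div_le_self (by linarith)
        exact one_le_pow₀ (by norm_num)
      linarith
    have hs1 : 1 - (1 - r) / 2 ^ n < 1 := by
      have : 0 < (1 - r) / 2 ^ n := div_pos (by linarith) h2n
      linarith
    have key := hD _ hs0 hs1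
    have heq : (1 + (1 - (1 - r) / 2 ^ n)) / 2 = 1 - (1 - r) / 2 ^ (n + 1) := by
      rw [pow_succ]; field_simp; ring
    calc what ω r ≤ C ^ n * what ω (1 - (1 - r) / 2 ^ n) := ih r h0 h1
      _ ≤ C ^ n * (C * what ω ((1 + (1 - (1 - r) / 2 ^ n)) / 2)) := by
          apply mul_le_mul_of_nonneg_left key (pow_nonneg hC.le n)
      _ = C ^ (n + 1) * what ω (1 - (1 - r) / 2 ^ (n + 1)) := by rw [heq]; ring

lemma what_dbl {ω : ℂ → ℝ} (hω0 : ∀ z, 0 ≤ ω z) (hωp : WhatPos ω) {C : ℝ}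
    (hD : ∀ r : ℝ, 0 ≤ r → r < 1 → what ω r ≤ C * what ω ((1 + r) / 2))
    (hC : 0 < C) (n : ℕ) {x y : ℝ} (hx : 0 < x) (hx1 : x ≤ 1) (hy : 0 < y) (hy1 : y ≤ 1)
    (hxy : x ≤ 2 ^ n * y) : what ω (1 - x) ≤ C ^ n * what ω (1 - y) := by
  have h2n : (0:ℝ) < 2 ^ n := by positivity
  have h1 := what_iter hD hC n (1 - x) (by linarith) (by linarith)
  have heq : 1 - (1 - (1 - x)) / 2 ^ n = 1 - x / 2 ^ n := by ring_nf
  rw [heq] at h1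
  have hmono : what ω (1 - x / 2 ^ n) ≤ what ω (1 - y) := by
    apply what_mono hω0 (a := 1 - y) (b := 1 - x / 2 ^ n)
    · have : x / 2 ^ n ≤ y := by rw [div_le_iff₀ h2n]; linarith [mul_comm y ((2:ℝ)^n)]
      linarith
    · have : 0 ≤ x / 2 ^ n := by positivity
      linarith
    · exact hωp _ (by linarith) (by linarith)
  calc what ω (1 - x) ≤ C ^ n * what ω (1 - x / 2 ^ n) := h1
    _ ≤ C ^ n * what ω (1 - y) := by
        apply mul_le_mul_of_nonneg_left hmono (pow_nonneg hC.le n)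

lemma log_diff_le {u v K : ℝ} (hu : 0 < u) (hv : 0 < v) (hK : 1 ≤ K)
    (h1 : u ≤ K * v) (h2 : v ≤ K * u) : |Real.log u - Real.log v| ≤ Real.log K := by
  have hK0 : 0 < K := by linarith
  rw [abs_le]
  constructor
  · have h3 : Real.log v ≤ Real.log (K * u) := (Real.log_le_log_iff hv (by positivity)).mpr h2
    rw [Real.log_mul (ne_of_gt hK0) (ne_of_gt hu)] at h3
    linarith
  · have h3 : Real.log u ≤ Real.log (K * v) := (Real.log_le_log_iff hu (by positivity)).mpr h1
    rw [Real.log_mul (ne_of_gt hK0) (ne_of_gt hv)] at h3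
    linarith

lemma what_log_diff {ω : ℂ → ℝ} (hω0 : ∀ z, 0 ≤ ω z) (hωp : WhatPos ω) {C : ℝ} (hC : 1 < C)
    (hD : ∀ r : ℝ, 0 ≤ r → r < 1 → what ω r ≤ C * what ω ((1 + r) / 2)) (n : ℕ)
    {x y : ℝ} (hx : 0 < x) (hx1 : x ≤ 1) (hy : 0 < y) (hy1 : y ≤ 1)
    (hxy : x ≤ 2 ^ n * y) (hyx : y ≤ 2 ^ n * x) :
    |Real.log (what ω (1 - x)) - Real.log (what ω (1 - y))| ≤ Real.log (C ^ n) :=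
  log_diff_le (hωp _ (by linarith) (by linarith)) (hωp _ (by linarith) (by linarith))
    (one_le_pow₀ hC.le)
    (what_dbl hω0 hωp hD (by linarith) n hx hx1 hy hy1 hxy)
    (what_dbl hω0 hωp hD (by linarith) n hy hy1 hx hx1 hyx)

lemma log_min_bound {u v c : ℝ} (h : |Real.log u - Real.log v| ≤ c) (hc : 0 ≤ c) :
    |Real.log (min u v) - Real.log u| ≤ c := by
  rcases min_cases u v with ⟨h1, _⟩ | ⟨h1, _⟩
  · rw [h1]; simpa using hc
  · rw [h1, abs_sub_comm]; exact h

lemma key_identity (z ζ : ℂ) :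
    ‖1 - conj z * ζ‖ ^ 2 - ‖z - ζ‖ ^ 2 = (1 - ‖z‖ ^ 2) * (1 - ‖ζ‖ ^ 2) := by
  simp only [Complex.sq_norm, Complex.normSq_apply, Complex.sub_re,
    Complex.sub_im, Complex.mul_re, Complex.mul_im, Complex.one_re, Complex.one_im,
    Complex.conj_re, Complex.conj_im]
  ring

lemma of_abs_log_le {x K : ℝ} (hx : 0 < x) (h : |Real.log x| ≤ K) :
    (Real.exp K)⁻¹ ≤ x ∧ x ≤ Real.exp K := by
  rw [abs_le] at h
  constructor
  · rw [← Real.exp_log hx, ← Real.exp_neg]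
    exact Real.exp_le_exp.mpr (by linarith [h.1])
  · rw [← Real.exp_log hx]
    exact Real.exp_le_exp.mpr h.2

lemma core_bound (p q τ : ℝ) (hp : 0 < p) (hq : 0 < q) (hτ : 0 ≤ τ)
    {t WT MN V L W Λ Lω Lν : ℝ}
    (ht : 0 < t) (hWT : 0 < WT) (hMN : 0 < MN) (hV : 0 < V) (hL : 0 < L) (hW : 0 < W)
    (h1 : |Real.log t - Real.log L| ≤ Λ)
    (h2 : |Real.log WT - Real.log W| ≤ Lω)
    (h3 : |Real.log MN - (Real.log V - τ * Real.log L)| ≤ Lν + τ * Λ) :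
    |Real.log ((t ^ (1 / p - (τ + 1) / q) * WT ^ (1 / p)) / MN ^ (1 / q) *
      ((V ^ (1 / q) * L ^ (1 / q)) / (W ^ (1 / p) * L ^ (1 / p))))| ≤
      (1 / p) * (Λ + Lω) + ((τ + 1) / q) * Λ + (1 / q) * (Lν + τ * Λ) := by
  have hb : (0:ℝ) < 1 / p := by positivity
  have hc : (0:ℝ) < 1 / q := by positivity
  have hd : (0:ℝ) ≤ (τ + 1) / q := by positivity
  have pt := Real.rpow_pos_of_pos ht (1 / p - (τ + 1) / q)
  have pWT := Real.rpow_pos_of_pos hWT (1 / p)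
  have pMN := Real.rpow_pos_of_pos hMN (1 / q)
  have pV := Real.rpow_pos_of_pos hV (1 / q)
  have pLq := Real.rpow_pos_of_pos hL (1 / q)
  have pW := Real.rpow_pos_of_pos hW (1 / p)
  have pLp := Real.rpow_pos_of_pos hL (1 / p)
  have e1 : Real.log ((t ^ (1 / p - (τ + 1) / q) * WT ^ (1 / p)) / MN ^ (1 / q) *
      ((V ^ (1 / q) * L ^ (1 / q)) / (W ^ (1 / p) * L ^ (1 / p)))) =
      (1 / p - (τ + 1) / q) * Real.log t + (1 / p) * Real.log WT - (1 / q) * Real.log MN +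
      ((1 / q) * Real.log V + (1 / q) * Real.log L -
        ((1 / p) * Real.log W + (1 / p) * Real.log L)) := by
    rw [Real.log_mul (div_pos (mul_pos pt pWT) pMN).ne'
        (div_pos (mul_pos pV pLq) (mul_pos pW pLp)).ne',
      Real.log_div (mul_pos pt pWT).ne' pMN.ne',
      Real.log_div (mul_pos pV pLq).ne' (mul_pos pW pLp).ne',
      Real.log_mul pt.ne' pWT.ne', Real.log_mul pV.ne' pLq.ne', Real.log_mul pW.ne' pLp.ne',
      Real.log_rpow ht, Real.log_rpow hWT, Real.log_rpow hMN, Real.log_rpow hV,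
      Real.log_rpow hL, Real.log_rpow hW, Real.log_rpow hL]
  rw [e1]
  have hreg : (1 / p - (τ + 1) / q) * Real.log t + (1 / p) * Real.log WT -
      (1 / q) * Real.log MN +
      ((1 / q) * Real.log V + (1 / q) * Real.log L -
        ((1 / p) * Real.log W + (1 / p) * Real.log L)) =
      (1 / p) * (Real.log t - Real.log L) + (1 / p) * (Real.log WT - Real.log W) -
      ((τ + 1) / q) * (Real.log t - Real.log L) -
      (1 / q) * (Real.log MN - (Real.log V - τ * Real.log L)) := by
    field_simp
    ring
  rw [hreg]
  have a1 := abs_le.mp h1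
  have a2 := abs_le.mp h2
  have a3 := abs_le.mp h3
  rw [abs_le]
  constructor <;>
  · linarith [mul_le_mul_of_nonneg_left a1.1 hb.le, mul_le_mul_of_nonneg_left a1.2 hb.le,
      mul_le_mul_of_nonneg_left a2.1 hb.le, mul_le_mul_of_nonneg_left a2.2 hb.le,
      mul_le_mul_of_nonneg_left a1.1 hd, mul_le_mul_of_nonneg_left a1.2 hd,
      mul_le_mul_of_nonneg_left a3.1 hc.le, mul_le_mul_of_nonneg_left a3.2 hc.le]

lemma whatE_shift (ω : ℂ → ℝ) (u : ℝ) : whatE ω (1 - u) = what ω (1 - min u 1) := by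
  rw [whatE]
  congr 1
  rcases le_total u 1 with h | h
  · rw [min_eq_left h, max_eq_left (by linarith)]
  · rw [min_eq_right h, max_eq_right (by linarith)]
    ring

end Aux


set_option maxHeartbeats 4000000 in
/-- Lemma 3.2: near the diagonal, `Γ_τ(z,ζ) ≍ γ(z)⁻¹ ≍ γ(ζ)⁻¹`. -/
theorem Gamma_diagonal (p q r τ : ℝ) (hp : 0 < p) (hq : 0 < q) (hr : 0 < r) (hτ : 0 ≤ τ)
    (ω ν : ℂ → ℝ) (hω : RadialWeight ω) (hωp : WhatPos ω) (hωD : Dhat ω)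
    (hν : RadialWeight ν) (hνp : WhatPos ν) (hνD : Dhat ν) :
    ∃ C ≥ (1 : ℝ), ∀ z ∈ UD, ∀ ζ ∈ UD, hyp z ζ ≤ r →
      (C⁻¹ ≤ Gam ω ν p q τ z ζ * gam ω ν p q z ∧ Gam ω ν p q τ z ζ * gam ω ν p q z ≤ C) ∧
      (C⁻¹ ≤ Gam ω ν p q τ z ζ * gam ω ν p q ζ ∧ Gam ω ν p q τ z ζ * gam ω ν p q ζ ≤ C) := by
  obtain ⟨hω0, -, -⟩ := hω
  obtain ⟨hν0, -, -⟩ := hν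
  obtain ⟨Cω, hCω, hDω⟩ := hωD
  obtain ⟨Cν, hCν, hDν⟩ := hνD
  obtain ⟨δ, hδd⟩ : ∃ x : ℝ, x = Real.exp (-(2 * r)) := ⟨_, rfl⟩
  have hδ0 : 0 < δ := hδd ▸ Real.exp_pos _
  have hδ1 : δ ≤ 1 := hδd ▸ Real.exp_le_one_iff.mpr (by linarith)
  obtain ⟨Kb, hKbd⟩ : ∃ x : ℝ, x = 128 / δ ^ 3 := ⟨_, rfl⟩
  have hKb128 : 128 ≤ Kb := by
    have hδ3 : δ ^ 3 ≤ 1 := pow_le_one₀ hδ0.le hδ1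
    rw [hKbd, le_div_iff₀ (by positivity)]
    linarith
  have hKb1 : 1 ≤ Kb := by linarith
  obtain ⟨n, hn⟩ : ∃ n : ℕ, Kb < 2 ^ n := pow_unbounded_of_one_lt Kb one_lt_two
  obtain ⟨Λ, hΛd⟩ : ∃ x : ℝ, x = Real.log Kb := ⟨_, rfl⟩
  obtain ⟨Lω, hLωd⟩ : ∃ x : ℝ, x = Real.log (Cω ^ n) := ⟨_, rfl⟩
  obtain ⟨Lν, hLνd⟩ : ∃ x : ℝ, x = Real.log (Cν ^ n) := ⟨_, rfl⟩
  have hΛ0 : 0 ≤ Λ := hΛd ▸ Real.log_nonneg hKb1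
  have hLω0 : 0 ≤ Lω := hLωd ▸ Real.log_nonneg (one_le_pow₀ hCω.le)
  have hLν0 : 0 ≤ Lν := hLνd ▸ Real.log_nonneg (one_le_pow₀ hCν.le)
  refine ⟨Real.exp ((1 / p) * (Λ + Lω) + ((τ + 1) / q) * Λ + (1 / q) * (Lν + τ * Λ)), ?_, ?_⟩
  · have h1 : (0:ℝ) ≤ (1 / p) * (Λ + Lω) := by positivity
    have h2 : (0:ℝ) ≤ ((τ + 1) / q) * Λ := by positivity
    have h3 : (0:ℝ) ≤ (1 / q) * (Lν + τ * Λ) := by positivity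
    calc (1:ℝ) = Real.exp 0 := Real.exp_zero.symm
      _ ≤ _ := Real.exp_le_exp.mpr (by linarith)
  intro z hz ζ hζ hβ
  have hz1 : ‖z‖ < 1 := mem_ball_zero_iff.mp hz
  have hζ1 : ‖ζ‖ < 1 := mem_ball_zero_iff.mp hζ
  have hz0 : (0:ℝ) ≤ ‖z‖ := norm_nonneg z
  have hζ0 : (0:ℝ) ≤ ‖ζ‖ := norm_nonneg ζ
  have hzsq : ‖z‖ ^ 2 < 1 := pow_lt_one₀ hz0 hz1 (by norm_num)
  have hζsq : ‖ζ‖ ^ 2 < 1 := pow_lt_one₀ hζ0 hζ1 (by norm_num)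
  obtain ⟨Lz, hLzd⟩ : ∃ x : ℝ, x = 1 - ‖z‖ := ⟨_, rfl⟩
  obtain ⟨Lζ, hLζd⟩ : ∃ x : ℝ, x = 1 - ‖ζ‖ := ⟨_, rfl⟩
  have hLz0 : 0 < Lz := by rw [hLzd]; linarith
  have hLζ0 : 0 < Lζ := by rw [hLζd]; linarith
  have hLz1 : Lz ≤ 1 := by rw [hLzd]; linarith
  have hLζ1 : Lζ ≤ 1 := by rw [hLζd]; linarith
  obtain ⟨A, hAd⟩ : ∃ x : ℝ, x = 1 - ‖z‖ ^ 2 := ⟨_, rfl⟩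
  obtain ⟨B, hBd⟩ : ∃ x : ℝ, x = 1 - ‖ζ‖ ^ 2 := ⟨_, rfl⟩
  have hA0 : 0 < A := by rw [hAd]; linarith
  have hB0 : 0 < B := by rw [hBd]; linarith
  have hALz : Lz ≤ A := by
    rw [hAd, hLzd]; linarith [mul_nonneg hz0 (sub_nonneg.mpr hz1.le)]
  have hBLζ : Lζ ≤ B := by
    rw [hBd, hLζd]; linarith [mul_nonneg hζ0 (sub_nonneg.mpr hζ1.le)]
  have hA2Lz : A ≤ 2 * Lz := by rw [hAd, hLzd]; linarith [sq_nonneg (1 - ‖z‖)]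
  have hB2Lζ : B ≤ 2 * Lζ := by rw [hBd, hLζd]; linarith [sq_nonneg (1 - ‖ζ‖)]
  obtain ⟨s0, hs0d⟩ : ∃ x : ℝ, x = ‖1 - conj z * ζ‖ := ⟨_, rfl⟩
  obtain ⟨N, hNd⟩ : ∃ x : ℝ, x = s0 ^ 2 := ⟨_, rfl⟩
  obtain ⟨M, hMd⟩ : ∃ x : ℝ, x = max A B := ⟨_, rfl⟩
  have hAM : A ≤ M := hMd ▸ le_max_left A B
  have hBM : B ≤ M := hMd ▸ le_max_right A B
  have hM0 : 0 < M := lt_of_lt_of_le hA0 hAM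
  have hM1 : M ≤ 1 := by
    rw [hMd]
    apply max_le
    · rw [hAd]; linarith [sq_nonneg ‖z‖]
    · rw [hBd]; linarith [sq_nonneg ‖ζ‖]
  have hgm : 1 - ‖z‖ * ‖ζ‖ ≤ s0 := by
    rw [hs0d]
    have h := norm_sub_norm_le (1 : ℂ) (conj z * ζ)
    simpa [norm_mul, RCLike.norm_conj] using h
  have hM2s : M ≤ 2 * s0 := by
    rw [hMd]
    apply max_le
    · rw [hAd]; linarith [sq_nonneg (‖z‖ - ‖ζ‖)]
    · rw [hBd]; linarith [sq_nonneg (‖z‖ - ‖ζ‖)]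
  have hs00 : 0 < s0 := by linarith
  have hN0 : 0 < N := by rw [hNd]; positivity
  have hM2N : M ^ 2 ≤ 4 * N := by
    rw [hNd]
    calc M ^ 2 ≤ (2 * s0) ^ 2 := pow_le_pow_left₀ hM0.le hM2s 2
      _ = 4 * s0 ^ 2 := by ring
  have hid : N - ‖z - ζ‖ ^ 2 = A * B := by
    rw [hNd, hs0d, hAd, hBd]; exact key_identity z ζ
  obtain ⟨ρ, hρd⟩ : ∃ x : ℝ, x = pd z ζ := ⟨_, rfl⟩
  have hρeq : ρ = ‖z - ζ‖ / s0 := by rw [hρd, pd, norm_div, hs0d]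
  have hρ0 : 0 ≤ ρ := by rw [hρd]; exact norm_nonneg _
  have hρs : ρ * s0 = ‖z - ζ‖ := by rw [hρeq]; field_simp
  have hsq : ‖z - ζ‖ ^ 2 = ρ ^ 2 * N := by rw [← hρs, hNd]; ring
  have hρ1 : ρ < 1 := by
    have h1 : ‖z - ζ‖ ^ 2 < s0 ^ 2 := by
      rw [← hNd]; linarith [mul_pos hA0 hB0]
    have h2 : ‖z - ζ‖ < s0 := lt_of_pow_lt_pow_left₀ 2 hs00.le h1
    rw [hρeq, div_lt_one hs00]
    exact h2
  have hβ' : Real.log ((1 + ρ) / (1 - ρ)) ≤ 2 * r := by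
    have hh : 1 / 2 * Real.log ((1 + ρ) / (1 - ρ)) ≤ r := by
      rw [hρd]; simpa only [hyp] using hβ
    linarith
  have hfrac : (1 + ρ) / (1 - ρ) ≤ Real.exp (2 * r) := by
    have hu : (0:ℝ) < (1 + ρ) / (1 - ρ) := by apply div_pos <;> linarith
    calc (1 + ρ) / (1 - ρ) = Real.exp (Real.log ((1 + ρ) / (1 - ρ))) := (Real.exp_log hu).symm
      _ ≤ Real.exp (2 * r) := Real.exp_le_exp.mpr hβ'
  have hδρ : δ ≤ 1 - ρ := by
    have hδE : δ * Real.exp (2 * r) = 1 := by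
      rw [hδd, ← Real.exp_add]; norm_num
    have h1 : 1 + ρ ≤ Real.exp (2 * r) * (1 - ρ) := by
      rw [div_le_iff₀ (by linarith : (0:ℝ) < 1 - ρ)] at hfrac
      linarith
    have h2 : δ * (Real.exp (2 * r) * (1 - ρ)) = 1 - ρ := by
      rw [← mul_assoc, hδE]; ring
    linarith only [mul_le_mul_of_nonneg_left h1 hδ0.le, h2, mul_nonneg hδ0.le hρ0]
  have hδN : δ * N ≤ A * B := by
    have h1 : δ * N ≤ (1 - ρ) * N := mul_le_mul_of_nonneg_right hδρ hN0.le
    have h2 : ρ ^ 2 * N ≤ ρ * N := by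
      have h := mul_le_mul_of_nonneg_right
        (mul_le_mul_of_nonneg_left hρ1.le hρ0) hN0.le
      calc ρ ^ 2 * N = ρ * ρ * N := by ring
        _ ≤ ρ * 1 * N := h
        _ = ρ * N := by ring
    linarith only [hid, hsq, h1, h2]
  have hABM : A * B ≤ M * M := mul_le_mul hAM hBM hB0.le hM0.le
  have hδMz : δ * M ≤ 8 * Lz := by
    have a1 : δ * M ^ 2 ≤ δ * (4 * N) := mul_le_mul_of_nonneg_left hM2N hδ0.le
    have a3 : A * B ≤ A * M := mul_le_mul_of_nonneg_left hBM hA0.le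
    have h1 : (δ * M) * M ≤ (4 * A) * M := by linarith only [a1, hδN, a3]
    have h2 : δ * M ≤ 4 * A := le_of_mul_le_mul_right h1 hM0
    linarith only [h2, hA2Lz, hδ0, hM0]
  have hδMζ : δ * M ≤ 8 * Lζ := by
    have a1 : δ * M ^ 2 ≤ δ * (4 * N) := mul_le_mul_of_nonneg_left hM2N hδ0.le
    have a3 : A * B ≤ M * B := mul_le_mul_of_nonneg_right hAM hB0.le
    have h1 : (δ * M) * M ≤ (4 * B) * M := by linarith only [a1, hδN, a3]
    have h2 : δ * M ≤ 4 * B := le_of_mul_le_mul_right h1 hM0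
    linarith only [h2, hB2Lζ, hδ0, hM0]
  have hLzM : Lz ≤ M := le_trans hALz hAM
  have hLζM : Lζ ≤ M := le_trans hBLζ hBM
  have hKbmul : ∀ L L' : ℝ, 0 < L → δ * M ≤ 8 * L → L' ≤ M → L' ≤ Kb * L := by
    intro L L' hL h8 hLM
    rw [hKbd, div_mul_eq_mul_div, le_div_iff₀ (by positivity)]
    have b1 : L' * δ ^ 3 ≤ M * δ ^ 3 := mul_le_mul_of_nonneg_right hLM (by positivity)
    have b3 : (δ * M) * δ ^ 2 ≤ (8 * L) * δ ^ 2 :=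
      mul_le_mul_of_nonneg_right h8 (sq_nonneg δ)
    have b4 : (8 * L) * δ ^ 2 ≤ 8 * L :=
      mul_le_of_le_one_right (by linarith) (pow_le_one₀ hδ0.le hδ1)
    have b2 : M * δ ^ 3 = (δ * M) * δ ^ 2 := by ring
    linarith only [b1, b2, b3, b4, hL]
  have hLζKbLz : Lζ ≤ Kb * Lz := hKbmul Lz Lζ hLz0 hδMz hLζM
  have hLzKbLζ : Lz ≤ Kb * Lζ := hKbmul Lζ Lz hLζ0 hδMζ hLzM
  obtain ⟨t0, ht0d⟩ : ∃ x : ℝ, x = N / M := ⟨_, rfl⟩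
  have ht00 : 0 < t0 := by rw [ht0d]; positivity
  obtain ⟨x, hxd⟩ : ∃ y : ℝ, y = min (2 * N / M) 1 := ⟨_, rfl⟩
  have hx0 : 0 < x := by
    rw [hxd]
    apply lt_min _ one_pos
    positivity
  have hx1 : x ≤ 1 := hxd ▸ min_le_right _ _
  have hx2t : x ≤ 2 * t0 := by
    rw [hxd, ht0d, mul_div_assoc]
    exact min_le_left _ _
  have hδ3gen : ∀ L : ℝ, 0 < L → δ * M ≤ 8 * L → L ≤ M → δ ^ 3 * N ≤ 64 * (L * M) := by
    intro L hL h8 hLM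
    have c1 : δ ^ 2 * (δ * N) ≤ δ ^ 2 * (A * B) :=
      mul_le_mul_of_nonneg_left hδN (sq_nonneg δ)
    have c2 : δ ^ 2 * (A * B) ≤ δ ^ 2 * (M * M) :=
      mul_le_mul_of_nonneg_left hABM (sq_nonneg δ)
    have c3 : (δ * M) * (δ * M) ≤ (8 * L) * (8 * L) :=
      mul_le_mul h8 h8 (by positivity) (by linarith)
    have c4 : L * L ≤ L * M := mul_le_mul_of_nonneg_left hLM hL.le
    linarith only [c1, c2, c3, c4]
  have hδ3N : δ ^ 3 * N ≤ 64 * (Lz * M) := hδ3gen Lz hLz0 hδMz hLzM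
  have hδ3Nζ : δ ^ 3 * N ≤ 64 * (Lζ * M) := hδ3gen Lζ hLζ0 hδMζ hLζM
  have h2t0Kb : ∀ L : ℝ, 0 < L → δ ^ 3 * N ≤ 64 * (L * M) → 2 * t0 ≤ Kb * L := by
    intro L hL h64
    rw [ht0d, ← mul_div_assoc, div_le_iff₀ hM0, hKbd,
      show 128 / δ ^ 3 * L * M = 128 * (L * M) / δ ^ 3 from by ring,
      le_div_iff₀ (by positivity)]
    linarith only [h64]
  have ht0KbLz : t0 ≤ Kb * Lz := by linarith only [h2t0Kb Lz hLz0 hδ3N, ht00]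
  have ht0KbLζ : t0 ≤ Kb * Lζ := by linarith only [h2t0Kb Lζ hLζ0 hδ3Nζ, ht00]
  have hxKbLz : x ≤ Kb * Lz := le_trans hx2t (h2t0Kb Lz hLz0 hδ3N)
  have hxKbLζ : x ≤ Kb * Lζ := le_trans hx2t (h2t0Kb Lζ hLζ0 hδ3Nζ)
  have hL4t : ∀ L : ℝ, 0 < L → L ≤ M → L ≤ 4 * t0 := by
    intro L hL hLM
    rw [ht0d, ← mul_div_assoc, le_div_iff₀ hM0]
    have d1 : L * M ≤ M * M := mul_le_mul_of_nonneg_right hLM hM0.le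
    linarith only [d1, hM2N]
  have hLz4t : Lz ≤ 4 * t0 := hL4t Lz hLz0 hLzM
  have hLζ4t : Lζ ≤ 4 * t0 := hL4t Lζ hLζ0 hLζM
  have hKb4t0 : 4 * t0 ≤ Kb * t0 :=
    mul_le_mul_of_nonneg_right (by linarith only [hKb128]) ht00.le
  have hLzKbt0 : Lz ≤ Kb * t0 := by linarith only [hKb4t0, hLz4t]
  have hLζKbt0 : Lζ ≤ Kb * t0 := by linarith only [hKb4t0, hLζ4t]
  have hL2x : ∀ L : ℝ, 0 < L → L ≤ 1 → L ≤ 4 * t0 → L ≤ 2 * x := by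
    intro L hL hL1 h4t
    have h' : L / 2 ≤ min (2 * N / M) 1 := by
      apply le_min
      · rw [show (2:ℝ) * N / M = 2 * (N / M) from mul_div_assoc 2 N M, ← ht0d]
        linarith only [h4t]
      · linarith only [hL1]
    rw [hxd]; linarith only [h']
  have hLz2x : Lz ≤ 2 * x := hL2x Lz hLz0 hLz1 hLz4t
  have hLζ2x : Lζ ≤ 2 * x := hL2x Lζ hLζ0 hLζ1 hLζ4t
  have hKb2x : 2 * x ≤ Kb * x :=
    mul_le_mul_of_nonneg_right (by linarith only [hKb128]) hx0.le
  have hLzKbx : Lz ≤ Kb * x := by linarith only [hKb2x, hLz2x]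
  have hLζKbx : Lζ ≤ Kb * x := by linarith only [hKb2x, hLζ2x]
  have hcast : ∀ u v : ℝ, 0 ≤ v → u ≤ Kb * v → u ≤ 2 ^ n * v := fun u v hv h =>
    le_trans h (mul_le_mul_of_nonneg_right hn.le hv)
  have hVz0 : 0 < what ν ‖z‖ := hνp _ hz0 hz1
  have hVζ0 : 0 < what ν ‖ζ‖ := hνp _ hζ0 hζ1
  have hWz0 : 0 < what ω ‖z‖ := hωp _ hz0 hz1
  have hWζ0 : 0 < what ω ‖ζ‖ := hωp _ hζ0 hζ1
  have hWT0 : 0 < what ω (1 - x) := hωp _ (by linarith only [hx1]) (by linarith only [hx0])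
  have hzeq : (1:ℝ) - Lz = ‖z‖ := by rw [hLzd]; ring
  have hζeq : (1:ℝ) - Lζ = ‖ζ‖ := by rw [hLζd]; ring
  have hlt_z : |Real.log t0 - Real.log Lz| ≤ Λ := by
    rw [hΛd]; exact log_diff_le ht00 hLz0 hKb1 ht0KbLz hLzKbt0
  have hlt_ζ : |Real.log t0 - Real.log Lζ| ≤ Λ := by
    rw [hΛd]; exact log_diff_le ht00 hLζ0 hKb1 ht0KbLζ hLζKbt0
  have hW_z : |Real.log (what ω (1 - x)) - Real.log (what ω ‖z‖)| ≤ Lω := by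
    have h := what_log_diff hω0 hωp hCω hDω n hx0 hx1 hLz0 hLz1
      (hcast x Lz hLz0.le hxKbLz) (hcast Lz x hx0.le hLzKbx)
    rw [hzeq] at h
    rw [hLωd]; exact h
  have hW_ζ : |Real.log (what ω (1 - x)) - Real.log (what ω ‖ζ‖)| ≤ Lω := by
    have h := what_log_diff hω0 hωp hCω hDω n hx0 hx1 hLζ0 hLζ1
      (hcast x Lζ hLζ0.le hxKbLζ) (hcast Lζ x hx0.le hLζKbx)
    rw [hζeq] at h
    rw [hLωd]; exact h
  have hV_zζ : |Real.log (what ν ‖z‖) - Real.log (what ν ‖ζ‖)| ≤ Lν := by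
    have h := what_log_diff hν0 hνp hCν hDν n hLz0 hLz1 hLζ0 hLζ1
      (hcast Lz Lζ hLζ0.le hLzKbLζ) (hcast Lζ Lz hLz0.le hLζKbLz)
    rw [hzeq, hζeq] at h
    rw [hLνd]; exact h
  have hL_zζ : |Real.log Lz - Real.log Lζ| ≤ Λ := by
    rw [hΛd]; exact log_diff_le hLz0 hLζ0 hKb1 hLzKbLζ hLζKbLz
  have hLzτ : 0 < Lz ^ τ := Real.rpow_pos_of_pos hLz0 τ
  have hLζτ : 0 < Lζ ^ τ := Real.rpow_pos_of_pos hLζ0 τ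
  have hu0 : 0 < what ν ‖z‖ / Lz ^ τ := div_pos hVz0 hLzτ
  have hv0 : 0 < what ν ‖ζ‖ / Lζ ^ τ := div_pos hVζ0 hLζτ
  have hMN0 : 0 < min (what ν ‖z‖ / Lz ^ τ) (what ν ‖ζ‖ / Lζ ^ τ) := lt_min hu0 hv0
  have hlogu : Real.log (what ν ‖z‖ / Lz ^ τ) = Real.log (what ν ‖z‖) - τ * Real.log Lz := by
    rw [Real.log_div hVz0.ne' hLzτ.ne', Real.log_rpow hLz0]
  have hlogv : Real.log (what ν ‖ζ‖ / Lζ ^ τ) = Real.log (what ν ‖ζ‖) - τ * Real.log Lζ := by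
    rw [Real.log_div hVζ0.ne' hLζτ.ne', Real.log_rpow hLζ0]
  have hcnn : 0 ≤ Lν + τ * Λ := add_nonneg hLν0 (mul_nonneg hτ hΛ0)
  have huv : |Real.log (what ν ‖z‖ / Lz ^ τ) - Real.log (what ν ‖ζ‖ / Lζ ^ τ)| ≤ Lν + τ * Λ := by
    rw [hlogu, hlogv]
    have h1 := abs_le.mp hV_zζ
    have h2 := abs_le.mp hL_zζ
    rw [abs_le]
    constructor <;>
      linarith only [h1.1, h1.2, mul_le_mul_of_nonneg_left h2.1 hτ,
        mul_le_mul_of_nonneg_left h2.2 hτ]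
  have hMN_z : |Real.log (min (what ν ‖z‖ / Lz ^ τ) (what ν ‖ζ‖ / Lζ ^ τ)) -
      (Real.log (what ν ‖z‖) - τ * Real.log Lz)| ≤ Lν + τ * Λ := by
    have h := log_min_bound huv hcnn
    rwa [hlogu] at h
  have hMN_ζ : |Real.log (min (what ν ‖z‖ / Lz ^ τ) (what ν ‖ζ‖ / Lζ ^ τ)) -
      (Real.log (what ν ‖ζ‖) - τ * Real.log Lζ)| ≤ Lν + τ * Λ := by
    have huv' : |Real.log (what ν ‖ζ‖ / Lζ ^ τ) - Real.log (what ν ‖z‖ / Lz ^ τ)| ≤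
        Lν + τ * Λ := by
      rw [abs_sub_comm]; exact huv
    have h := log_min_bound huv' hcnn
    rw [min_comm] at h
    rwa [hlogv] at h
  have hEq1 : Gam ω ν p q τ z ζ * gam ω ν p q z =
      (t0 ^ (1 / p - (τ + 1) / q) * (what ω (1 - x)) ^ (1 / p)) /
        (min (what ν ‖z‖ / Lz ^ τ) (what ν ‖ζ‖ / Lζ ^ τ)) ^ (1 / q) *
      (((what ν ‖z‖) ^ (1 / q) * Lz ^ (1 / q)) /
        ((what ω ‖z‖) ^ (1 / p) * Lz ^ (1 / p))) := by
    unfold Gam gam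
    rw [whatE_shift]
    rw [← hAd, ← hBd, ← hs0d, ← hNd, ← hMd, ← hLzd, ← hLζd, ← hxd, ← ht0d]
  have hEq2 : Gam ω ν p q τ z ζ * gam ω ν p q ζ =
      (t0 ^ (1 / p - (τ + 1) / q) * (what ω (1 - x)) ^ (1 / p)) /
        (min (what ν ‖z‖ / Lz ^ τ) (what ν ‖ζ‖ / Lζ ^ τ)) ^ (1 / q) *
      (((what ν ‖ζ‖) ^ (1 / q) * Lζ ^ (1 / q)) /
        ((what ω ‖ζ‖) ^ (1 / p) * Lζ ^ (1 / p))) := by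
    unfold Gam gam
    rw [whatE_shift]
    rw [← hAd, ← hBd, ← hs0d, ← hNd, ← hMd, ← hLzd, ← hLζd, ← hxd, ← ht0d]
  have hpos1 : 0 < Gam ω ν p q τ z ζ * gam ω ν p q z := by
    rw [hEq1]
    exact mul_pos
      (div_pos (mul_pos (Real.rpow_pos_of_pos ht00 _) (Real.rpow_pos_of_pos hWT0 _))
        (Real.rpow_pos_of_pos hMN0 _))
      (div_pos (mul_pos (Real.rpow_pos_of_pos hVz0 _) (Real.rpow_pos_of_pos hLz0 _))
        (mul_pos (Real.rpow_pos_of_pos hWz0 _) (Real.rpow_pos_of_pos hLz0 _)))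
  have hpos2 : 0 < Gam ω ν p q τ z ζ * gam ω ν p q ζ := by
    rw [hEq2]
    exact mul_pos
      (div_pos (mul_pos (Real.rpow_pos_of_pos ht00 _) (Real.rpow_pos_of_pos hWT0 _))
        (Real.rpow_pos_of_pos hMN0 _))
      (div_pos (mul_pos (Real.rpow_pos_of_pos hVζ0 _) (Real.rpow_pos_of_pos hLζ0 _))
        (mul_pos (Real.rpow_pos_of_pos hWζ0 _) (Real.rpow_pos_of_pos hLζ0 _)))
  have hfin1 : |Real.log (Gam ω ν p q τ z ζ * gam ω ν p q z)| ≤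
      (1 / p) * (Λ + Lω) + ((τ + 1) / q) * Λ + (1 / q) * (Lν + τ * Λ) := by
    rw [hEq1]
    exact core_bound p q τ hp hq hτ ht00 hWT0 hMN0 hVz0 hLz0 hWz0 hlt_z hW_z hMN_z
  have hfin2 : |Real.log (Gam ω ν p q τ z ζ * gam ω ν p q ζ)| ≤
      (1 / p) * (Λ + Lω) + ((τ + 1) / q) * Λ + (1 / q) * (Lν + τ * Λ) := by
    rw [hEq2]
    exact core_bound p q τ hp hq hτ ht00 hWT0 hMN0 hVζ0 hLζ0 hWζ0 hlt_ζ hW_ζ hMN_ζ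
  exact ⟨of_abs_log_le hpos1 hfin1, of_abs_log_le hpos2 hfin2⟩
end
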